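/- arXiv:2003.04441 — 8 statements merged into one kernel-verified Lean document; each statement's English description precedes it below -/
import Mathlib

section
/- If the sequence (e_n) satisfies e_{n+1} = (1 + α/n) e_n + q for n ≥ 1 with e_1 = s, where α ∈ (0,1) and q ≥ 0, then e_n = qn/(1-α) + (s - q/(1-α)) · Γ(n+α)/(Γ(1+α)Γ(n)) for all n ≥ 1. -/
open Filter Real

theorem stmt2 (α q s : ℝ) (hα : 0 < α) (hα1 : α < 1) (hq : 0 ≤ q)
    (e : ℕ → ℝ) (he1 : e 1 = s)
    (hrec : ∀ n : ℕ, 1 ≤ n → e (n + 1) = (1 + α / n) * e n + q) :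
    ∀ n : ℕ, 1 ≤ n →
      e n = q * n / (1 - α) +
        (s - q / (1 - α)) * (Real.Gamma (n + α) / (Real.Gamma (1 + α) * Real.Gamma n)) := by
  have h1α : (1 : ℝ) - α ≠ 0 := by linarith
  have hΓ1α : Real.Gamma (1 + α) ≠ 0 := ne_of_gt (Real.Gamma_pos_of_pos (by linarith))
  intro n hn
  induction n with
  | zero => omega
  | succ m ih =>
    rcases Nat.eq_or_lt_of_le hn with h | h
    · -- m = 0
      have hm : m = 0 := by omega
      subst hm
      simp [he1, Real.Gamma_one]
      field_simp
      ring
    · have hm : 1 ≤ m := by omega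
      have ihm := ih hm
      have hmR : (m : ℝ) ≠ 0 := Nat.cast_ne_zero.mpr (by omega)
      have hmpos : (0:ℝ) < m := by exact_mod_cast Nat.pos_of_ne_zero (by omega)
      have hΓm : Real.Gamma m ≠ 0 := ne_of_gt (Real.Gamma_pos_of_pos hmpos)
      have hΓm1 : Real.Gamma (↑(m+1)) = m * Real.Gamma m := by
        push_cast
        rw [Real.Gamma_add_one hmR]
      have hΓmα : Real.Gamma (↑(m+1) + α) = (m + α) * Real.Gamma (m + α) := by
        push_cast
        have : (m:ℝ) + 1 + α = ((m:ℝ) + α) + 1 := by ring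
        rw [this, Real.Gamma_add_one (by positivity)]
      rw [hrec m hm, ihm, hΓm1, hΓmα]
      push_cast
      field_simp
      ring
end

section
/- For the laziest minimal random walk with parameter p ∈ (0,1) (q = 0, s = 1), the process M̂_n := H_n / a_n, where a_n = Γ(n+p)/(Γ(n)Γ(1+p)), is a martingale with respect to the natural filtration: E[M̂_{n+1} | F_n] = M̂_n for all n ≥ 1. -/
open MeasureTheory ProbabilityTheory Filter Real

/-- Position of the laziest minimal random walk: `H n = X 1 + ... + X n`. -/
def lazyH {Ω : Type*} (X : ℕ → Ω → ℕ) (n : ℕ) (ω : Ω) : ℕ :=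
  ∑ i ∈ Finset.Icc 1 n, X i ω

/-- `a n = Γ(n+p)/(Γ(n)Γ(1+p))`. -/
noncomputable def aSeq (p : ℝ) (n : ℕ) : ℝ :=
  Real.Gamma (n + p) / (Real.Gamma n * Real.Gamma (1 + p))

theorem stmt3 {Ω : Type*} {m0 : MeasurableSpace Ω} (μ : Measure Ω) [IsProbabilityMeasure μ]
    (ℱ : Filtration ℕ m0) (p : ℝ) (hp : 0 < p) (hp1 : p < 1)
    (X : ℕ → Ω → ℕ)
    (hXval : ∀ n ω, X n ω ≤ 1)
    (hX1 : ∀ᵐ ω ∂μ, X 1 ω = 1)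
    (hadp : ∀ n, Measurable[ℱ n] (X n))
    (hcond : ∀ n : ℕ, 1 ≤ n →
      μ[(fun ω => (X (n + 1) ω : ℝ)) | ℱ n] =ᵐ[μ]
        fun ω => p * (lazyH X n ω : ℝ) / n) :
    ∀ n : ℕ, 1 ≤ n →
      μ[(fun ω => (lazyH X (n + 1) ω : ℝ) / aSeq p (n + 1)) | ℱ n] =ᵐ[μ]
        fun ω => (lazyH X n ω : ℝ) / aSeq p n := by
  intro n hn
  have hn0 : (0:ℝ) < n := by exact_mod_cast hn
  set f : Ω → ℝ := fun ω => (lazyH X n ω : ℝ) with hf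
  set g : Ω → ℝ := fun ω => (X (n+1) ω : ℝ) with hg
  -- measurability
  have hXmeas : ∀ i, Measurable (X i) := fun i => (hadp i).mono (ℱ.le i) le_rfl
  have hfFn : Measurable[ℱ n] f := by
    apply Measurable.comp (measurable_from_top (f := (Nat.cast : ℕ → ℝ)))
    apply Finset.measurable_sum
    intro i hi
    exact (hadp i).mono (ℱ.mono (Finset.mem_Icc.mp hi).2) le_rfl
  have hfmeas : Measurable f := hfFn.mono (ℱ.le n) le_rfl
  have hgmeas : Measurable g := by
    exact Measurable.comp (measurable_from_top) (hXmeas (n+1))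
  -- integrability
  have hf_int : Integrable f μ := by
    apply Integrable.mono' (integrable_const (n:ℝ)) hfmeas.aestronglyMeasurable
    filter_upwards with ω
    rw [Real.norm_eq_abs, abs_of_nonneg (by positivity)]
    have : lazyH X n ω ≤ n := by
      calc lazyH X n ω ≤ ∑ i ∈ Finset.Icc 1 n, 1 := Finset.sum_le_sum fun i _ => hXval i ω
        _ = n := by simp
    simp only [hf]
    exact_mod_cast this
  have hg_int : Integrable g μ := by
    apply Integrable.mono' (integrable_const (1:ℝ)) hgmeas.aestronglyMeasurable
    filter_upwards with ω
    rw [Real.norm_eq_abs, abs_of_nonneg (by positivity)]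
    simp only [hg]
    exact_mod_cast hXval (n+1) ω
  -- aSeq facts
  have hΓn : (0:ℝ) < Real.Gamma n := Real.Gamma_pos_of_pos hn0
  have hΓnp : (0:ℝ) < Real.Gamma (n + p) := Real.Gamma_pos_of_pos (by linarith)
  have hΓ1p : (0:ℝ) < Real.Gamma (1 + p) := Real.Gamma_pos_of_pos (by linarith)
  have ha_pos : 0 < aSeq p n := by
    unfold aSeq; positivity
  have ha_succ : aSeq p (n+1) = aSeq p n * ((n + p) / n) := by
    unfold aSeq
    have h1 : ((n:ℝ)+1) + p = (n + p) + 1 := by ring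
    have h2 : Real.Gamma ((n+p)+1) = (n+p) * Real.Gamma (n+p) :=
      Real.Gamma_add_one (by linarith)
    have h3 : Real.Gamma ((n:ℝ)+1) = n * Real.Gamma n :=
      Real.Gamma_add_one (by linarith)
    push_cast
    rw [h1, h2, h3]
    field_simp
  -- decompose lazyH (n+1)
  have hsplit : ∀ ω, (lazyH X (n+1) ω : ℝ) = f ω + g ω := by
    intro ω
    have : lazyH X (n+1) ω = lazyH X n ω + X (n+1) ω := by
      unfold lazyH
      rw [← Finset.sum_Icc_succ_top (by omega : 1 ≤ n + 1)]
    rw [this]; push_cast; ring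
  have heq : (fun ω => (lazyH X (n+1) ω : ℝ) / aSeq p (n+1))
      = (aSeq p (n+1))⁻¹ • fun ω => f ω + g ω := by
    funext ω; rw [hsplit ω]; simp [div_eq_inv_mul]
  rw [heq]
  have hc1 : μ[((aSeq p (n+1))⁻¹ • fun ω => f ω + g ω) | ℱ n]
      =ᵐ[μ] (aSeq p (n+1))⁻¹ • μ[(fun ω => f ω + g ω) | ℱ n] :=
    condExp_smul _ _ _
  have hc2 : μ[(fun ω => f ω + g ω) | ℱ n] =ᵐ[μ] μ[f | ℱ n] + μ[g | ℱ n] :=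
    condExp_add hf_int hg_int _
  have hc3 : μ[f | ℱ n] =ᵐ[μ] f := Filter.EventuallyEq.of_eq <|
    condExp_of_stronglyMeasurable (ℱ.le n) hfFn.stronglyMeasurable hf_int
  have hc4 : μ[g | ℱ n] =ᵐ[μ] fun ω => p * f ω / n := hcond n hn
  refine hc1.trans ?_
  filter_upwards [hc2, hc3, hc4] with ω h2 h3 h4
  simp only [Pi.smul_apply, Pi.add_apply, smul_eq_mul] at *
  rw [h2, h3, h4, ha_succ]
  have hnp : (0:ℝ) < n + p := by linarith
  field_simp
  ring
end

section
/- For the laziest minimal random walk with parameter p ∈ (0,1), the k-th factorial moment of the position satisfies E[(H_n)_k] = k! · Σ_{i=1}^{k} (-1)^{k-i} C(k-1, i-1) a_n^{(i)} for all integers k ≥ 1 and n ≥ 1, where (x)_k = x(x-1)···(x-k+1) is the falling factorial and a_n^{(i)} = Γ(n+ip)/(Γ(n)Γ(1+ip)). -/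
open MeasureTheory ProbabilityTheory Filter Real

/-- `a n k = Γ(n+kp)/(Γ(n)Γ(1+kp))`. -/
noncomputable def aSeqK (p : ℝ) (k n : ℕ) : ℝ :=
  Real.Gamma (n + k * p) / (Real.Gamma n * Real.Gamma (1 + k * p))

/- ### Auxiliary combinatorial lemmas -/

lemma lmrw_desc_add_one (h j : ℕ) :
    (h + 1).descFactorial (j + 1) = h.descFactorial (j + 1) + (j + 1) * h.descFactorial j := by
  rw [Nat.succ_descFactorial_succ, Nat.descFactorial_succ]
  rcases Nat.lt_or_ge h j with hl | hl
  · simp [Nat.descFactorial_eq_zero_iff_lt.2 hl]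
  · have : h + 1 = (h - j) + (j + 1) := by omega
    rw [this, Nat.add_mul]

lemma lmrw_desc_mul_self (h j : ℕ) :
    h.descFactorial j * h = h.descFactorial (j + 1) + j * h.descFactorial j := by
  rw [Nat.descFactorial_succ]
  rcases Nat.lt_or_ge h j with hl | hl
  · simp [Nat.descFactorial_eq_zero_iff_lt.2 hl]
  · have : h = (h - j) + j := by omega
    nth_rewrite 2 [this]
    ring

lemma lmrw_choose_id (m j : ℕ) (hm : 1 ≤ m) :
    (m - j) * Nat.choose m j = m * Nat.choose (m - 1) j := by
  obtain ⟨m', rfl⟩ := Nat.exists_eq_succ_of_ne_zero (by omega : m ≠ 0)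
  have h1 := Nat.choose_succ_right_eq (m' + 1) j
  have h2 := Nat.add_one_mul_choose_eq m' j
  simp only [Nat.succ_eq_add_one] at h2 ⊢
  have e : m' + 1 - 1 = m' := by omega
  rw [e, h2, h1, Nat.mul_comm]

/- ### The `a` sequence -/

lemma lmrw_aRec (p : ℝ) (hp : 0 < p) {n : ℕ} (hn : 1 ≤ n) (i : ℕ) :
    aSeqK p i (n + 1) = (((n : ℝ) + i * p) / n) * aSeqK p i n := by
  have hn0 : (0:ℝ) < (n:ℝ) := by exact_mod_cast hn
  have hx : (0:ℝ) < (n:ℝ) + i * p := by positivity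
  have h1 : Real.Gamma ((n:ℝ) + 1 + i * p) = ((n:ℝ) + i * p) * Real.Gamma ((n:ℝ) + i * p) := by
    rw [show (n:ℝ) + 1 + i * p = ((n:ℝ) + i * p) + 1 by ring, Real.Gamma_add_one (ne_of_gt hx)]
  have h2 : Real.Gamma ((n:ℝ) + 1) = (n:ℝ) * Real.Gamma (n:ℝ) := Real.Gamma_add_one (ne_of_gt hn0)
  have hΓn : Real.Gamma (n:ℝ) ≠ 0 := ne_of_gt (Real.Gamma_pos_of_pos hn0)
  unfold aSeqK
  push_cast
  rw [h1, h2]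
  field_simp

lemma lmrw_aOne (p : ℝ) (hp : 0 < p) (i : ℕ) : aSeqK p i 1 = 1 := by
  have h : (0:ℝ) < 1 + i * p := by positivity
  unfold aSeqK
  rw [Nat.cast_one, Real.Gamma_one, one_mul, div_self (ne_of_gt (Real.Gamma_pos_of_pos h))]

/- ### The target sequence `B` -/

noncomputable def lmrwB (p : ℝ) (k n : ℕ) : ℝ :=
  (k.factorial : ℝ) *
    ∑ i ∈ Finset.Icc 1 k, (-1 : ℝ) ^ (k - i) * ((k - 1).choose (i - 1) : ℝ) * aSeqK p i n

lemma lmrw_perterm (p n : ℝ) (hn : n ≠ 0) (j i : ℕ) (hi1 : 1 ≤ i) (hik : i ≤ j + 1) (a : ℝ) :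
    ((j+1).factorial : ℝ) * ((-1:ℝ)^(j+1-i) * ((j.choose (i-1)):ℝ) * ((n + i*p)/n * a))
      = ((j+1).factorial : ℝ) * ((-1:ℝ)^(j+1-i) * ((j.choose (i-1)):ℝ) * a)
        + ((j:ℝ)+1) * (p/n) * ( ((j+1).factorial:ℝ) * ((-1:ℝ)^(j+1-i) * ((j.choose (i-1)):ℝ) * a)
            + (j:ℝ) * ((j.factorial:ℝ) * ((-1:ℝ)^(j-i) * (((j-1).choose (i-1)):ℝ) * a)) ) := by
  have hfact : ((j+1).factorial : ℝ) = ((j:ℝ)+1) * (j.factorial:ℝ) := by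
    push_cast [Nat.factorial_succ]; ring
  rcases eq_or_lt_of_le hik with rfl | hlt
  · -- i = j + 1
    have e1 : j + 1 - (j + 1) = 0 := by omega
    have e2 : (j + 1) - 1 = j := by omega
    have e3 : j - (j + 1) = 0 := by omega
    rw [e1, e2, e3, pow_zero, Nat.choose_self, Nat.cast_one, hfact]
    have hz : (j:ℝ) * (((j-1).choose j):ℝ) = 0 := by
      rcases Nat.eq_zero_or_pos j with rfl | hj
      · simp
      · rw [Nat.choose_eq_zero_of_lt (by omega), Nat.cast_zero, mul_zero]
    field_simp
    push_cast
    linear_combination (-(p * a)) * hz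
  · -- i ≤ j
    have hij : i ≤ j := by omega
    have hj1 : 1 ≤ j := le_trans hi1 hij
    have hjR : (j:ℝ) ≠ 0 := by exact_mod_cast Nat.pos_iff_ne_zero.mp hj1
    have hs : j + 1 - i = (j - i) + 1 := by omega
    have hnat : (j + 1 - i) * (j.choose (i-1)) = j * ((j-1).choose (i-1)) := by
      have := lmrw_choose_id j (i-1) hj1
      rwa [show j - (i-1) = j + 1 - i by omega] at this
    have hr : ((j:ℝ) + 1 - (i:ℝ)) * ((j.choose (i-1)):ℝ) = (j:ℝ) * (((j-1).choose (i-1)):ℝ) := by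
      have h := congrArg (Nat.cast (R := ℝ)) hnat
      push_cast at h
      rw [Nat.cast_sub (by omega : i ≤ j + 1)] at h
      push_cast at h
      linarith [h]
    have hC' : (((j-1).choose (i-1)):ℝ) = (((j:ℝ) + 1 - (i:ℝ)) * ((j.choose (i-1)):ℝ)) / (j:ℝ) := by
      rw [eq_div_iff hjR]
      linarith [hr]
    rw [hfact, hs, pow_succ, hC']
    field_simp
    ring

lemma lmrw_Bext (p : ℝ) (j n : ℕ) :
    (j:ℝ) * lmrwB p j n
      = ∑ i ∈ Finset.Icc 1 (j+1),
          (j:ℝ) * ((j.factorial:ℝ) *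
            ((-1:ℝ)^(j-i) * (((j-1).choose (i-1)):ℝ) * aSeqK p i n)) := by
  have htop : (j:ℝ) * ((j.factorial:ℝ) *
      ((-1:ℝ)^(j-(j+1)) * (((j-1).choose ((j+1)-1)):ℝ) * aSeqK p (j+1) n)) = 0 := by
    rcases Nat.eq_zero_or_pos j with rfl | hj
    · simp
    · rw [show (j+1) - 1 = j by omega, Nat.choose_eq_zero_of_lt (by omega)]
      simp
  rw [Finset.sum_Icc_succ_top (by omega : 1 ≤ j + 1), htop, add_zero]
  unfold lmrwB
  rw [Finset.mul_sum, Finset.mul_sum]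

lemma lmrw_Brec (p : ℝ) (hp : 0 < p) {n : ℕ} (hn : 1 ≤ n) (j : ℕ) :
    lmrwB p (j+1) (n+1)
      = lmrwB p (j+1) n + ((j:ℝ)+1) * (p/n) * (lmrwB p (j+1) n + (j:ℝ) * lmrwB p j n) := by
  have hn0 : (n:ℝ) ≠ 0 := by
    have : (0:ℝ) < (n:ℝ) := by exact_mod_cast hn
    exact ne_of_gt this
  have e2 : (j + 1) - 1 = j := by omega
  calc lmrwB p (j+1) (n+1)
      = ∑ i ∈ Finset.Icc 1 (j+1), ((j+1).factorial : ℝ) *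
          ((-1:ℝ)^(j+1-i) * ((j.choose (i-1)):ℝ) * ((((n:ℝ) + i * p))/n * aSeqK p i n)) := by
        unfold lmrwB
        rw [e2, Finset.mul_sum]
        exact Finset.sum_congr rfl fun i _ => by rw [lmrw_aRec p hp hn i]
    _ = ∑ i ∈ Finset.Icc 1 (j+1),
          ( ((j+1).factorial : ℝ) * ((-1:ℝ)^(j+1-i) * ((j.choose (i-1)):ℝ) * aSeqK p i n)
            + ((j:ℝ)+1) * (p/n) *
              ( ((j+1).factorial:ℝ) * ((-1:ℝ)^(j+1-i) * ((j.choose (i-1)):ℝ) * aSeqK p i n)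
                + (j:ℝ) * ((j.factorial:ℝ) *
                    ((-1:ℝ)^(j-i) * (((j-1).choose (i-1)):ℝ) * aSeqK p i n)) ) ) := by
        refine Finset.sum_congr rfl fun i hi => ?_
        have h1 : 1 ≤ i := (Finset.mem_Icc.mp hi).1
        have h2 : i ≤ j + 1 := (Finset.mem_Icc.mp hi).2
        exact lmrw_perterm p n hn0 j i h1 h2 _
    _ = lmrwB p (j+1) n + ((j:ℝ)+1) * (p/n) * (lmrwB p (j+1) n + (j:ℝ) * lmrwB p j n) := by
        rw [Finset.sum_add_distrib]
        simp only [← Finset.mul_sum]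
        rw [Finset.sum_add_distrib, ← lmrw_Bext]
        simp only [← Finset.mul_sum]
        unfold lmrwB
        rw [e2]

lemma lmrw_Bone (p : ℝ) (hp : 0 < p) (k : ℕ) (hk : 1 ≤ k) :
    lmrwB p k 1 = ((1:ℕ).descFactorial k : ℝ) := by
  rcases eq_or_lt_of_le hk with rfl | hk2
  · simp [lmrwB, lmrw_aOne p hp]
  · have hd : (1:ℕ).descFactorial k = 0 := Nat.descFactorial_eq_zero_iff_lt.2 (by omega)
    rw [hd, Nat.cast_zero]
    unfold lmrwB
    simp only [lmrw_aOne p hp, mul_one]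
    rw [← Finset.Ico_add_one_right_eq_Icc, Finset.sum_Ico_eq_sum_range]
    rw [show k + 1 - 1 = k from rfl]
    have hterm : ∀ i ∈ Finset.range k,
        (-1:ℝ)^(k-(1+i)) * (((k-1).choose ((1+i)-1)):ℝ)
          = (-1:ℝ)^(k-1) * ((-1:ℝ)^i * (((k-1).choose i):ℝ)) := by
      intro i hi
      have hi' : i < k := Finset.mem_range.mp hi
      have hsq : (-1:ℝ)^i * (-1:ℝ)^i = 1 := by
        rw [← mul_pow]; norm_num
      have hsgn : (-1:ℝ)^(k-(1+i)) = (-1:ℝ)^(k-1) * (-1:ℝ)^i := by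
        have h1 : (-1:ℝ)^(k-1) = (-1:ℝ)^(k-(1+i)) * (-1:ℝ)^i := by
          rw [← pow_add, show k - (1+i) + i = k - 1 from by omega]
        rw [h1, mul_assoc, hsq, mul_one]
      rw [hsgn, show (1+i) - 1 = i from by omega]
      ring
    rw [Finset.sum_congr rfl hterm, ← Finset.mul_sum]
    have hI : ∑ i ∈ Finset.range k, (-1:ℝ)^i * (((k-1).choose i):ℝ) = 0 := by
      have h0 := Int.alternating_sum_range_choose (n := k - 1)
      rw [if_neg (by omega : k - 1 ≠ 0)] at h0
      rw [show k - 1 + 1 = k from by omega] at h0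
      have := congrArg (fun z : ℤ => (z : ℝ)) h0
      push_cast at this
      convert this using 2
    rw [hI, mul_zero, mul_zero]


theorem stmt4 {Ω : Type*} {m0 : MeasurableSpace Ω} (μ : Measure Ω) [IsProbabilityMeasure μ]
    (ℱ : Filtration ℕ m0) (p : ℝ) (hp : 0 < p) (hp1 : p < 1)
    (X : ℕ → Ω → ℕ)
    (hXval : ∀ n ω, X n ω ≤ 1)
    (hX1 : ∀ᵐ ω ∂μ, X 1 ω = 1)
    (hadp : ∀ n, Measurable[ℱ n] (X n))
    (hcond : ∀ n : ℕ, 1 ≤ n →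
      μ[(fun ω => (X (n + 1) ω : ℝ)) | ℱ n] =ᵐ[μ]
        fun ω => p * (lazyH X n ω : ℝ) / n) :
    ∀ k : ℕ, 1 ≤ k → ∀ n : ℕ, 1 ≤ n →
      ∫ ω, ((lazyH X n ω).descFactorial k : ℝ) ∂μ =
        (k.factorial : ℝ) *
          ∑ i ∈ Finset.Icc 1 k, (-1 : ℝ) ^ (k - i) * ((k - 1).choose (i - 1) : ℝ) * aSeqK p i n := by
  have hXm0 : ∀ i, Measurable (X i) := fun i => (hadp i).mono (ℱ.le i) le_rfl
  have hHmF : ∀ n : ℕ, Measurable[ℱ n] (lazyH X n) := by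
    intro n
    apply Finset.measurable_sum
    intro i hi
    exact (hadp i).mono (ℱ.mono (Finset.mem_Icc.mp hi).2) le_rfl
  have hHm0 : ∀ n, Measurable (lazyH X n) := fun n => (hHmF n).mono (ℱ.le n) le_rfl
  have hHle : ∀ n ω, lazyH X n ω ≤ n := by
    intro n ω
    calc lazyH X n ω ≤ ∑ i ∈ Finset.Icc 1 n, 1 := Finset.sum_le_sum fun i _ => hXval i ω
      _ = n := by simp
  have hbdd : ∀ (f : Ω → ℕ) (C : ℕ), Measurable f → (∀ ω, f ω ≤ C) →
      Integrable (fun ω => (f ω : ℝ)) μ := by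
    intro f C hf hC
    refine Integrable.mono' (integrable_const (C:ℝ))
      (measurable_from_top.comp hf).aestronglyMeasurable ?_
    exact Filter.Eventually.of_forall fun ω => by
      rw [Real.norm_natCast]; exact_mod_cast hC ω
  have hDle : ∀ n j (ω : Ω), (lazyH X n ω).descFactorial j ≤ n ^ j := fun n j ω =>
    le_trans (Nat.descFactorial_le_pow _ _) (Nat.pow_le_pow_left (hHle n ω) j)
  have hDm : ∀ n j, Measurable (fun ω => (lazyH X n ω).descFactorial j) := by
    intro n j
    exact (measurable_from_top : Measurable fun m : ℕ => m.descFactorial j).comp (hHm0 n)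
  have intD : ∀ n j, Integrable (fun ω => ((lazyH X n ω).descFactorial j : ℝ)) μ :=
    fun n j => hbdd _ (n ^ j) (hDm n j) (hDle n j)
  have intDX : ∀ n j,
      Integrable (fun ω => ((lazyH X n ω).descFactorial j : ℝ) * (X (n+1) ω : ℝ)) μ := by
    intro n j
    have he : (fun ω => ((lazyH X n ω).descFactorial j : ℝ) * (X (n+1) ω : ℝ))
        = fun ω => (((lazyH X n ω).descFactorial j * X (n+1) ω : ℕ) : ℝ) := by
      funext ω; push_cast; ring
    rw [he]
    exact hbdd _ (n ^ j * 1) ((hDm n j).mul (hXm0 (n+1)))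
      (fun ω => Nat.mul_le_mul (hDle n j ω) (hXval _ ω))
  -- key conditional expectation step
  have hkey : ∀ n : ℕ, 1 ≤ n → ∀ j : ℕ,
      ∫ ω, ((lazyH X n ω).descFactorial j : ℝ) * (X (n+1) ω : ℝ) ∂μ
        = (p / n) * ((∫ ω, ((lazyH X n ω).descFactorial (j+1) : ℝ) ∂μ)
            + (j:ℝ) * ∫ ω, ((lazyH X n ω).descFactorial j : ℝ) ∂μ) := by
    intro n hn j
    have hn0 : (n:ℝ) ≠ 0 := by
      have : (0:ℝ) < (n:ℝ) := by exact_mod_cast hn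
      exact ne_of_gt this
    set f : Ω → ℝ := fun ω => ((lazyH X n ω).descFactorial j : ℝ) with hf_def
    set g : Ω → ℝ := fun ω => (X (n+1) ω : ℝ) with hg_def
    have hfm : Measurable[ℱ n] f := by
      exact (measurable_from_top : Measurable fun m : ℕ => ((m.descFactorial j : ℕ) : ℝ)).comp (hHmF n)
    have hfSM : StronglyMeasurable[ℱ n] f := hfm.stronglyMeasurable
    have hgint : Integrable g μ := hbdd _ 1 (hXm0 (n+1)) (hXval (n+1))
    have hfgint : Integrable (f * g) μ := intDX n j
    have h1 : μ[f * g | ℱ n] =ᵐ[μ] f * μ[g | ℱ n] :=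
      condExp_mul_of_stronglyMeasurable_left hfSM hfgint hgint
    have h2 : f * μ[g | ℱ n] =ᵐ[μ] fun ω => f ω * (p * (lazyH X n ω : ℝ) / n) := by
      filter_upwards [hcond n hn] with ω hω
      simp only [Pi.mul_apply, hg_def, hω]
    have hpt : ∀ ω, f ω * (p * (lazyH X n ω : ℝ) / n)
        = (p / n) * (((lazyH X n ω).descFactorial (j+1) : ℝ) + (j:ℝ) * f ω) := by
      intro ω
      have hc := lmrw_desc_mul_self (lazyH X n ω) j
      have hcr : ((lazyH X n ω).descFactorial j : ℝ) * (lazyH X n ω : ℝ)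
          = ((lazyH X n ω).descFactorial (j+1) : ℝ)
            + (j:ℝ) * ((lazyH X n ω).descFactorial j : ℝ) := by
        exact_mod_cast hc
      simp only [hf_def]
      rw [show ((lazyH X n ω).descFactorial j : ℝ) * (p * (lazyH X n ω : ℝ) / n)
          = (p / n) * (((lazyH X n ω).descFactorial j : ℝ) * (lazyH X n ω : ℝ)) from by ring,
        hcr]
    calc ∫ ω, f ω * g ω ∂μ
        = ∫ ω, (μ[f * g | ℱ n]) ω ∂μ := (integral_condExp (ℱ.le n)).symm
      _ = ∫ ω, f ω * (p * (lazyH X n ω : ℝ) / n) ∂μ := integral_congr_ae (h1.trans h2)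
      _ = ∫ ω, (p / n) * (((lazyH X n ω).descFactorial (j+1) : ℝ) + (j:ℝ) * f ω) ∂μ := by
          simp only [hpt]
      _ = (p / n) * ((∫ ω, ((lazyH X n ω).descFactorial (j+1) : ℝ) ∂μ)
            + (j:ℝ) * ∫ ω, ((lazyH X n ω).descFactorial j : ℝ) ∂μ) := by
          rw [integral_const_mul, integral_add (intD n (j+1)) ((intD n j).const_mul _),
            integral_const_mul]
  -- one-step recurrence for the moments
  have hstep : ∀ n : ℕ, 1 ≤ n → ∀ j : ℕ,
      ∫ ω, ((lazyH X (n+1) ω).descFactorial (j+1) : ℝ) ∂μ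
        = (∫ ω, ((lazyH X n ω).descFactorial (j+1) : ℝ) ∂μ)
          + ((j:ℝ)+1) * (p / n) * ((∫ ω, ((lazyH X n ω).descFactorial (j+1) : ℝ) ∂μ)
              + (j:ℝ) * ∫ ω, ((lazyH X n ω).descFactorial j : ℝ) ∂μ) := by
    intro n hn j
    have hpt : ∀ ω, ((lazyH X (n+1) ω).descFactorial (j+1) : ℝ)
        = ((lazyH X n ω).descFactorial (j+1) : ℝ)
          + ((j:ℝ)+1) * (((lazyH X n ω).descFactorial j : ℝ) * (X (n+1) ω : ℝ)) := by
      intro ω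
      have hH : lazyH X (n+1) ω = lazyH X n ω + X (n+1) ω := by
        unfold lazyH
        rw [Finset.sum_Icc_succ_top (by omega : 1 ≤ n + 1)]
      rw [hH]
      rcases Nat.le_one_iff_eq_zero_or_eq_one.mp (hXval (n+1) ω) with h | h <;> rw [h]
      · simp
      · rw [lmrw_desc_add_one]; push_cast; ring
    simp only [hpt]
    rw [integral_add (intD n (j+1)) ((intDX n j).const_mul _), integral_const_mul,
      hkey n hn j]
    ring
  -- main induction
  have main : ∀ n : ℕ, 1 ≤ n → ∀ j : ℕ,
      ∫ ω, ((lazyH X n ω).descFactorial (j+1) : ℝ) ∂μ = lmrwB p (j+1) n := by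
    intro n hn
    induction n, hn using Nat.le_induction with
    | base =>
      intro j
      have hae : (fun ω => ((lazyH X 1 ω).descFactorial (j+1) : ℝ))
          =ᵐ[μ] fun _ => (((1:ℕ).descFactorial (j+1) : ℕ) : ℝ) := by
        filter_upwards [hX1] with ω hω
        have : lazyH X 1 ω = X 1 ω := by unfold lazyH; simp
        rw [this, hω]
      rw [integral_congr_ae hae, integral_const, probReal_univ, one_smul,
        lmrw_Bone p hp (j+1) (by omega)]
    | succ n hn ih =>
      intro j
      rw [hstep n hn j, lmrw_Brec p hp hn j, ih j]
      have hterm : (j:ℝ) * ∫ ω, ((lazyH X n ω).descFactorial j : ℝ) ∂μ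
          = (j:ℝ) * lmrwB p j n := by
        rcases Nat.eq_zero_or_pos j with rfl | hj
        · simp
        · obtain ⟨j', rfl⟩ := Nat.exists_eq_succ_of_ne_zero (by omega : j ≠ 0)
          rw [ih j']
      rw [hterm]
  intro k hk n hn
  obtain ⟨j, rfl⟩ := Nat.exists_eq_succ_of_ne_zero (by omega : k ≠ 0)
  have := main n hn j
  rw [this]
  unfold lmrwB
  rfl
end

section
/- For the laziest minimal random walk with parameter p ∈ (0,1), the factorial moments satisfy the recursion E[(H_{n+1})_k] = ((n+kp)/n) · E[(H_n)_k] + (k(k-1)p/n) · E[(H_n)_{k-1}] for all n ≥ 1 and k ≥ 1. -/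
open MeasureTheory ProbabilityTheory Filter Real

lemma descFact_aux1 (m j : ℕ) :
    (m + 1).descFactorial (j + 1) = m.descFactorial (j + 1) + (j + 1) * m.descFactorial j := by
  rw [Nat.succ_descFactorial_succ, Nat.descFactorial_succ]
  rcases le_or_gt j m with h | h
  · have hm : m + 1 = (m - j) + (j + 1) := by omega
    rw [hm, add_mul]
  · rw [Nat.descFactorial_eq_zero_iff_lt.2 h]
    simp

lemma descFact_aux2 (m j : ℕ) :
    m * m.descFactorial j = m.descFactorial (j + 1) + j * m.descFactorial j := by
  rw [Nat.descFactorial_succ]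
  rcases le_or_gt j m with h | h
  · rw [← add_mul, Nat.sub_add_cancel h]
  · rw [Nat.descFactorial_eq_zero_iff_lt.2 h]
    simp

theorem stmt5 {Ω : Type*} {m0 : MeasurableSpace Ω} (μ : Measure Ω) [IsProbabilityMeasure μ]
    (ℱ : Filtration ℕ m0) (p : ℝ) (hp : 0 < p) (hp1 : p < 1)
    (X : ℕ → Ω → ℕ)
    (hXval : ∀ n ω, X n ω ≤ 1)
    (hX1 : ∀ᵐ ω ∂μ, X 1 ω = 1)
    (hadp : ∀ n, Measurable[ℱ n] (X n))
    (hcond : ∀ n : ℕ, 1 ≤ n →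
      μ[(fun ω => (X (n + 1) ω : ℝ)) | ℱ n] =ᵐ[μ]
        fun ω => p * (lazyH X n ω : ℝ) / n) :
    ∀ n : ℕ, 1 ≤ n → ∀ k : ℕ, 1 ≤ k →
      ∫ ω, ((lazyH X (n + 1) ω).descFactorial k : ℝ) ∂μ =
        ((n + k * p) / n) * ∫ ω, ((lazyH X n ω).descFactorial k : ℝ) ∂μ
          + ((k : ℝ) * ((k : ℝ) - 1) * p / n) * ∫ ω, ((lazyH X n ω).descFactorial (k - 1) : ℝ) ∂μ := by
  intro n hn k hk
  have hm : ℱ n ≤ m0 := ℱ.le n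
  -- measurability of lazyH X n w.r.t. ℱ n
  have hHmeas : Measurable[ℱ n] (lazyH X n) := by
    apply Finset.measurable_sum
    intro i hi
    exact (hadp i).mono (ℱ.mono (Finset.mem_Icc.1 hi).2) le_rfl
  have hHle : ∀ ω, lazyH X n ω ≤ n := by
    intro ω
    calc lazyH X n ω ≤ ∑ i ∈ Finset.Icc 1 n, 1 :=
          Finset.sum_le_sum fun i _ => hXval i ω
      _ = n := by simp
  -- integrability of descFactorial functions
  have hFmeas : ∀ j : ℕ, Measurable fun ω => ((lazyH X n ω).descFactorial j : ℝ) := by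
    intro j
    exact Measurable.comp (g := fun m : ℕ => ((m.descFactorial j : ℝ))) measurable_from_top (hHmeas.mono hm le_rfl)
  have hFmeasF : ∀ j : ℕ, Measurable[ℱ n] fun ω => ((lazyH X n ω).descFactorial j : ℝ) := by
    intro j
    exact Measurable.comp (g := fun m : ℕ => ((m.descFactorial j : ℝ))) measurable_from_top hHmeas
  have hFbound : ∀ j : ℕ, ∀ ω, ‖((lazyH X n ω).descFactorial j : ℝ)‖ ≤ (n.descFactorial j : ℝ) := by
    intro j ω
    rw [Real.norm_eq_abs, abs_of_nonneg (by positivity)]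
    exact_mod_cast Nat.descFactorial_le j (hHle ω)
  have hint : ∀ j : ℕ, Integrable (fun ω => ((lazyH X n ω).descFactorial j : ℝ)) μ := by
    intro j
    refine Integrable.mono' (integrable_const ((n.descFactorial j : ℝ))) (hFmeas j).aestronglyMeasurable ?_
    filter_upwards with ω using hFbound j ω
  have hXmeas : Measurable fun ω => ((X (n + 1) ω : ℝ)) :=
    measurable_from_top.comp ((hadp (n + 1)).mono (ℱ.le (n + 1)) le_rfl)
  have hXb : ∀ ω, ‖((X (n + 1) ω : ℝ))‖ ≤ 1 := by
    intro ω
    rw [Real.norm_eq_abs, abs_of_nonneg (by positivity)]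
    exact_mod_cast hXval (n + 1) ω
  have hXint : Integrable (fun ω => ((X (n + 1) ω : ℝ))) μ := by
    refine Integrable.mono' (integrable_const 1) hXmeas.aestronglyMeasurable ?_
    filter_upwards with ω using hXb ω
  set F1 : Ω → ℝ := fun ω => ((lazyH X n ω).descFactorial k : ℝ) with hF1
  set F2 : Ω → ℝ := fun ω => ((lazyH X n ω).descFactorial (k - 1) : ℝ) with hF2
  set X' : Ω → ℝ := fun ω => ((X (n + 1) ω : ℝ)) with hX'
  have hGint : Integrable (F2 * X') μ := by
    refine Integrable.mono' (integrable_const ((n.descFactorial (k - 1) : ℝ))) ?_ ?_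
    · exact ((hFmeas (k - 1)).mul hXmeas).aestronglyMeasurable
    · filter_upwards with ω
      calc ‖F2 ω * X' ω‖ = ‖F2 ω‖ * ‖X' ω‖ := norm_mul _ _
        _ ≤ (n.descFactorial (k - 1) : ℝ) * 1 :=
            mul_le_mul (hFbound (k - 1) ω) (hXb ω) (norm_nonneg _) (by positivity)
        _ = _ := mul_one _
  -- pull-out property
  have hce : μ[F2 * X' | ℱ n] =ᵐ[μ] fun ω => F2 ω * (p * (lazyH X n ω : ℝ) / n) := by
    have h1 := condExp_mul_of_stronglyMeasurable_left (μ := μ) ((hFmeasF (k - 1)).stronglyMeasurable) hGint hXint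
    have h2 := hcond n hn
    have h3 : F2 * μ[X' | ℱ n] =ᵐ[μ] fun ω => F2 ω * (p * (lazyH X n ω : ℝ) / n) := by
      filter_upwards [h2] with ω hω
      simp only [Pi.mul_apply, hX', hω]
    exact h1.trans h3
  have key : ∫ ω, F2 ω * X' ω ∂μ = ∫ ω, F2 ω * (p * (lazyH X n ω : ℝ) / n) ∂μ := by
    calc ∫ ω, F2 ω * X' ω ∂μ = ∫ ω, (F2 * X') ω ∂μ := rfl
      _ = ∫ ω, (μ[F2 * X' | ℱ n]) ω ∂μ := (integral_condExp hm).symm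
      _ = _ := integral_congr_ae hce
  -- compute ∫ F2 * (p H / n)
  have hptH : ∀ ω, F2 ω * (p * (lazyH X n ω : ℝ) / n) = (p / n) * (F1 ω + ((k : ℝ) - 1) * F2 ω) := by
    intro ω
    have hkk : k - 1 + 1 = k := by omega
    have h2 := descFact_aux2 (lazyH X n ω) (k - 1)
    rw [hkk] at h2
    have h2' : (lazyH X n ω : ℝ) * F2 ω = F1 ω + ((k : ℝ) - 1) * F2 ω := by
      simp only [hF1, hF2]
      have hc : ((k : ℝ) - 1) = ((k - 1 : ℕ) : ℝ) := by
        push_cast [hkk]; ring_nf; push_cast [Nat.cast_sub hk]; ring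
      rw [hc]
      exact_mod_cast congrArg (Nat.cast : ℕ → ℝ) h2
    calc F2 ω * (p * (lazyH X n ω : ℝ) / n) = (p / n) * ((lazyH X n ω : ℝ) * F2 ω) := by ring
      _ = (p / n) * (F1 ω + ((k : ℝ) - 1) * F2 ω) := by rw [h2']
  have key2 : ∫ ω, F2 ω * X' ω ∂μ
      = (p / n) * ((∫ ω, F1 ω ∂μ) + ((k : ℝ) - 1) * ∫ ω, F2 ω ∂μ) := by
    rw [key, integral_congr_ae (Eventually.of_forall hptH)]
    rw [integral_const_mul, integral_add (hint k) ((hint (k - 1)).const_mul _),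
      integral_const_mul]
  -- pointwise decomposition of descFactorial at n+1
  have hsum : ∀ ω, lazyH X (n + 1) ω = lazyH X n ω + X (n + 1) ω := by
    intro ω
    unfold lazyH
    rw [Finset.sum_Icc_succ_top (by omega : 1 ≤ n + 1)]
  have hpt : ∀ ω, ((lazyH X (n + 1) ω).descFactorial k : ℝ)
      = F1 ω + (k : ℝ) * (F2 ω * X' ω) := by
    intro ω
    have hx : X (n + 1) ω = 0 ∨ X (n + 1) ω = 1 := by
      have := hXval (n + 1) ω; omega
    have hkk : k - 1 + 1 = k := by omega
    rcases hx with hx | hx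
    · rw [hsum ω, hx]
      simp [hF1, hF2, hX', hx]
    · rw [hsum ω, hx]
      have h1 := descFact_aux1 (lazyH X n ω) (k - 1)
      rw [hkk] at h1
      simp only [hF1, hF2, hX', hx]
      rw [h1]
      push_cast [hkk]
      ring
  have hfinal : ∫ ω, ((lazyH X (n + 1) ω).descFactorial k : ℝ) ∂μ
      = (∫ ω, F1 ω ∂μ) + (k : ℝ) * ((p / n) * ((∫ ω, F1 ω ∂μ) + ((k : ℝ) - 1) * ∫ ω, F2 ω ∂μ)) := by
    have hintF1 : Integrable F1 μ := hint k
    have hI : Integrable (fun a => (k : ℝ) * (F2 a * X' a)) μ := hGint.const_mul _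
    rw [integral_congr_ae (Eventually.of_forall hpt), integral_add hintF1 hI,
      integral_const_mul, key2]
  have hn0 : (n : ℝ) ≠ 0 := by positivity
  rw [hfinal]
  field_simp
  ring
end

section
/- For the laziest minimal random walk with parameter p ∈ (0,1), the probability generating functions f_n(x) := E[x^{H_n}] satisfy the recursion f_{n+1}(x) = (p x (x-1)/n) · f_n'(x) + f_n(x) for all n ≥ 1 and all real x. -/
open MeasureTheory ProbabilityTheory Filter Real

/-- Probability generating function of the position `H n`. -/
noncomputable def lazyPGF {Ω : Type*} [MeasurableSpace Ω] (μ : MeasureTheory.Measure Ω)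
    (X : ℕ → Ω → ℕ) (n : ℕ) (x : ℝ) : ℝ :=
  ∫ ω, x ^ (lazyH X n ω) ∂μ

private lemma comp_eq_sum_indicator {Ω : Type*} (f : Ω → ℕ) (n : ℕ)
    (hle : ∀ ω, f ω ≤ n) (g : ℕ → ℝ) :
    (fun ω => g (f ω)) =
      fun ω => ∑ k ∈ Finset.range (n + 1), (f ⁻¹' {k}).indicator (fun _ => g k) ω := by
  funext ω
  rw [Finset.sum_eq_single (f ω)]
  · simp [Set.indicator_apply]
  · intro k _ hk
    exact Set.indicator_of_notMem (by simp [Ne.symm hk]) _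
  · intro h
    exact absurd (Finset.mem_range.2 (Nat.lt_succ_of_le (hle ω))) h

private lemma integrable_comp_nat {Ω : Type*} [MeasurableSpace Ω] (μ : Measure Ω)
    [IsFiniteMeasure μ] {f : Ω → ℕ} (hf : Measurable f) (n : ℕ)
    (hle : ∀ ω, f ω ≤ n) (g : ℕ → ℝ) :
    Integrable (fun ω => g (f ω)) μ := by
  rw [comp_eq_sum_indicator f n hle g]
  exact integrable_finset_sum _ fun k _ =>
    (integrable_const (g k)).indicator (hf (measurableSet_singleton k))

private lemma integral_comp_nat {Ω : Type*} [MeasurableSpace Ω] (μ : Measure Ω)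
    [IsFiniteMeasure μ] {f : Ω → ℕ} (hf : Measurable f) (n : ℕ)
    (hle : ∀ ω, f ω ≤ n) (g : ℕ → ℝ) :
    ∫ ω, g (f ω) ∂μ =
      ∑ k ∈ Finset.range (n + 1), (μ (f ⁻¹' {k})).toReal * g k := by
  rw [comp_eq_sum_indicator f n hle g, integral_finset_sum _ fun k _ =>
    (integrable_const (g k)).indicator (hf (measurableSet_singleton k))]
  refine Finset.sum_congr rfl fun k _ => ?_
  rw [integral_indicator_const (g k) (hf (measurableSet_singleton k)), smul_eq_mul]
  rfl

theorem stmt6 {Ω : Type*} {m0 : MeasurableSpace Ω} (μ : Measure Ω) [IsProbabilityMeasure μ]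
    (ℱ : Filtration ℕ m0) (p : ℝ) (hp : 0 < p) (hp1 : p < 1)
    (X : ℕ → Ω → ℕ)
    (hXval : ∀ n ω, X n ω ≤ 1)
    (hX1 : ∀ᵐ ω ∂μ, X 1 ω = 1)
    (hadp : ∀ n, Measurable[ℱ n] (X n))
    (hcond : ∀ n : ℕ, 1 ≤ n →
      μ[(fun ω => (X (n + 1) ω : ℝ)) | ℱ n] =ᵐ[μ]
        fun ω => p * (lazyH X n ω : ℝ) / n) :
    ∀ n : ℕ, 1 ≤ n → ∀ x : ℝ,
      lazyPGF μ X (n + 1) x =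
        (p * x * (x - 1) / n) * deriv (lazyPGF μ X n) x + lazyPGF μ X n x := by
  intro n hn x
  set H : Ω → ℕ := lazyH X n with hH
  have HmeasF : Measurable[ℱ n] H := by
    apply Finset.measurable_sum
    intro i hi
    exact (hadp i).mono (ℱ.mono (Finset.mem_Icc.1 hi).2) le_rfl
  have Hmeas : Measurable H := HmeasF.mono (ℱ.le n) le_rfl
  have Hle : ∀ ω, H ω ≤ n := by
    intro ω
    calc H ω ≤ ∑ i ∈ Finset.Icc 1 n, 1 := Finset.sum_le_sum fun i _ => hXval i ω
    _ = n := by simp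
  have Xmeas : Measurable (X (n + 1)) := (hadp (n + 1)).mono (ℱ.le (n + 1)) le_rfl
  have Hsucc : ∀ ω, lazyH X (n + 1) ω = H ω + X (n + 1) ω := by
    intro ω
    exact Finset.sum_Icc_succ_top (Nat.le_add_left 1 n) _
  -- the coefficients
  set c : ℕ → ℝ := fun k => (μ (H ⁻¹' {k})).toReal with hc
  have pgf_eq : lazyPGF μ X n = fun y => ∑ k ∈ Finset.range (n + 1), c k * y ^ k := by
    funext y
    exact integral_comp_nat μ Hmeas n Hle (fun k => y ^ k)
  -- derivative of the pgf
  have hderiv : deriv (lazyPGF μ X n) x =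
      ∑ k ∈ Finset.range (n + 1), c k * ((k : ℝ) * x ^ (k - 1)) := by
    rw [pgf_eq]
    have : HasDerivAt (fun y => ∑ k ∈ Finset.range (n + 1), c k * y ^ k)
        (∑ k ∈ Finset.range (n + 1), c k * ((k : ℝ) * x ^ (k - 1))) x := by
      apply HasDerivAt.fun_sum
      intro k _
      exact (hasDerivAt_pow k x).const_mul (c k)
    exact this.deriv
  -- the cross term via conditional expectation
  set g : Ω → ℝ := fun ω => x ^ H ω with hg
  set Y : Ω → ℝ := fun ω => (X (n + 1) ω : ℝ) with hY
  have hgSM : StronglyMeasurable[ℱ n] g :=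
    (measurable_from_top.comp HmeasF).stronglyMeasurable
  have hint_g : Integrable g μ := integrable_comp_nat μ Hmeas n Hle (fun k => x ^ k)
  have hint_Y : Integrable Y μ :=
    integrable_comp_nat μ Xmeas 1 (fun ω => hXval (n + 1) ω) (fun k => (k : ℝ))
  have hmeas_gY : AEStronglyMeasurable (g * Y) μ :=
    ((measurable_from_top.comp Hmeas).mul
      (measurable_from_top.comp Xmeas)).aestronglyMeasurable
  have hint_gY : Integrable (g * Y) μ := by
    refine hint_g.mono hmeas_gY (Filter.Eventually.of_forall fun ω => ?_)
    have hY1 : |Y ω| ≤ 1 := by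
      simp only [hY, Nat.abs_cast]
      exact_mod_cast hXval (n + 1) ω
    calc ‖g ω * Y ω‖ = |g ω| * |Y ω| := abs_mul _ _
    _ ≤ |g ω| * 1 := by
        exact mul_le_mul_of_nonneg_left hY1 (abs_nonneg _)
    _ = ‖g ω‖ := by simp
  have cross : ∫ ω, g ω * Y ω ∂μ = ∫ ω, g ω * (p * (H ω : ℝ) / n) ∂μ := by
    have h1 : ∫ ω, g ω * Y ω ∂μ = ∫ ω, (μ[g * Y | ℱ n]) ω ∂μ :=
      (integral_condExp (ℱ.le n) (f := g * Y)).symm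
    have h2 : μ[g * Y | ℱ n] =ᵐ[μ] g * μ[Y | ℱ n] :=
      condExp_mul_of_stronglyMeasurable_left hgSM hint_gY hint_Y
    have h3 : (g * μ[Y | ℱ n]) =ᵐ[μ] fun ω => g ω * (p * (H ω : ℝ) / n) := by
      filter_upwards [hcond n hn] with ω hω
      simp only [Pi.mul_apply, hY, hω, hH]
    rw [h1, integral_congr_ae (h2.trans h3)]
  -- split the (n+1)-th pgf
  have split : lazyPGF μ X (n + 1) x =
      lazyPGF μ X n x + (x - 1) * ∫ ω, g ω * Y ω ∂μ := by
    have hpt : ∀ ω, x ^ (lazyH X (n + 1) ω) = g ω + (x - 1) * (g ω * Y ω) := by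
      intro ω
      rw [Hsucc ω, pow_add]
      rcases Nat.le_one_iff_eq_zero_or_eq_one.mp (hXval (n + 1) ω) with h | h <;> simp [hg, hY, h] <;> ring
    calc lazyPGF μ X (n + 1) x = ∫ ω, (g ω + (x - 1) * (g ω * Y ω)) ∂μ := by
          unfold lazyPGF
          exact integral_congr_ae (Filter.Eventually.of_forall fun ω => hpt ω)
    _ = ∫ ω, g ω ∂μ + (x - 1) * ∫ ω, g ω * Y ω ∂μ := by
          have hint_gY' : Integrable (fun ω => g ω * Y ω) μ := hint_gY
          rw [integral_add hint_g (hint_gY'.const_mul (x - 1)), integral_const_mul]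
    _ = lazyPGF μ X n x + (x - 1) * ∫ ω, g ω * Y ω ∂μ := rfl
  -- compute the cross integral as a sum
  have cross_sum : ∫ ω, g ω * (p * (H ω : ℝ) / n) ∂μ =
      ∑ k ∈ Finset.range (n + 1), c k * (x ^ k * (p * (k : ℝ) / n)) :=
    integral_comp_nat μ Hmeas n Hle (fun k => x ^ k * (p * (k : ℝ) / n))
  rw [split, cross, cross_sum, hderiv, Finset.mul_sum, Finset.mul_sum]
  have hsum : ∑ k ∈ Finset.range (n + 1), (x - 1) * (c k * (x ^ k * (p * (k : ℝ) / n)))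
      = ∑ k ∈ Finset.range (n + 1),
          p * x * (x - 1) / n * (c k * ((k : ℝ) * x ^ (k - 1))) := by
    refine Finset.sum_congr rfl fun k _ => ?_
    rcases k with _ | m
    · simp
    · simp only [Nat.add_sub_cancel]
      push_cast
      ring
  rw [hsum]
  ring
end

section
/- For the laziest minimal random walk with parameter p ∈ (0,1), for every integer k ≥ 1, E[(H_n / n^p)^k] converges to k!/Γ(1+kp) as n → ∞. -/
open MeasureTheory ProbabilityTheory Filter Real Topology

namespace LazyAux

lemma asc_mul (h j : ℕ) : h * (h+1).ascFactorial j = h.ascFactorial (j+1) := by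
  rw [Nat.succ_ascFactorial, Nat.ascFactorial_succ]

lemma asc_step (h j : ℕ) :
    (h+1).ascFactorial (j+1) = h.ascFactorial (j+1) + (j+1) * (h+1).ascFactorial j := by
  rw [Nat.ascFactorial_succ, ← asc_mul]; ring

lemma asc_le (h k : ℕ) : h.ascFactorial k ≤ (h+k)^k := by
  induction k with
  | zero => simp
  | succ k ih =>
    rw [Nat.ascFactorial_succ, pow_succ]
    have h1 : h.ascFactorial k ≤ (h+(k+1))^k :=
      ih.trans (Nat.pow_le_pow_left (by omega) k)
    rw [mul_comm]; exact Nat.mul_le_mul h1 (by omega)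

lemma pow_diff (b d k : ℕ) :
    (b+d)^(k+1) ≤ b^(k+1) + (k+1)*d*(b+d)^k := by
  induction k with
  | zero => simp
  | succ k ih =>
    have hb : b^(k+1) ≤ (b+d)^(k+1) := Nat.pow_le_pow_left (by omega) _
    calc (b+d)^(k+2) = (b+d) * (b+d)^(k+1) := by ring
      _ ≤ (b+d) * (b^(k+1) + (k+1)*d*(b+d)^k) := Nat.mul_le_mul_left _ ih
      _ = b * b^(k+1) + d * b^(k+1) + (k+1)*d*(b+d)^(k+1) := by ring
      _ ≤ b^(k+2) + d * (b+d)^(k+1) + (k+1)*d*(b+d)^(k+1) := by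
          rw [show b*b^(k+1) = b^(k+2) from by ring]
          gcongr
      _ = b^(k+2) + (k+1+1)*d*(b+d)^(k+1) := by ring

lemma asc_double (h j : ℕ) (hh : 1 ≤ h) :
    (h+1).ascFactorial j ≤ 2^j * h.ascFactorial j := by
  induction j with
  | zero => simp
  | succ j ih =>
    rw [Nat.ascFactorial_succ, Nat.ascFactorial_succ, pow_succ]
    calc (h+1+j) * (h+1).ascFactorial j ≤ (2*(h+j)) * (2^j * h.ascFactorial j) :=
          Nat.mul_le_mul (by omega) ih
      _ = 2^j * 2 * ((h+j) * h.ascFactorial j) := by ring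

lemma asc_err (j : ℕ) : ∃ C : ℕ, ∀ h, 1 ≤ h →
    h.ascFactorial (j+1) ≤ h^(j+1) + C * h.ascFactorial j := by
  refine ⟨(j+1)*(j+1)*((j+1)^j * 2^j), fun h hh => ?_⟩
  have h1 : h.ascFactorial (j+1) ≤ (h+(j+1))^(j+1) := asc_le h (j+1)
  have h2 : (h+(j+1))^(j+1) ≤ h^(j+1) + (j+1)*(j+1)*(h+(j+1))^j := pow_diff h (j+1) j
  have h3 : (h+(j+1))^j ≤ (j+1)^j * 2^j * h.ascFactorial j := by
    calc (h+(j+1))^j ≤ ((h+1)*(j+1))^j := Nat.pow_le_pow_left (by nlinarith) j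
      _ = (j+1)^j * (h+1)^j := by rw [mul_pow]; ring
      _ ≤ (j+1)^j * (h+1).ascFactorial j :=
          Nat.mul_le_mul_left _ (Nat.pow_succ_le_ascFactorial (h+1) j)
      _ ≤ (j+1)^j * (2^j * h.ascFactorial j) := Nat.mul_le_mul_left _ (asc_double h j hh)
      _ = (j+1)^j * 2^j * h.ascFactorial j := by ring
  calc h.ascFactorial (j+1) ≤ h^(j+1) + (j+1)*(j+1)*(h+(j+1))^j := h1.trans h2
    _ ≤ h^(j+1) + (j+1)*(j+1)*((j+1)^j * 2^j * h.ascFactorial j) :=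
        Nat.add_le_add_left (Nat.mul_le_mul_left _ h3) _
    _ = h^(j+1) + (j+1)*(j+1)*((j+1)^j * 2^j) * h.ascFactorial j := by ring

lemma prod_eq (s : ℝ) (hs : 0 < s) (n : ℕ) :
    ∏ m ∈ Finset.range n, (1 + s/(m+1)) =
      (∏ j ∈ Finset.range (n+1), (s + j)) / (s * n.factorial) := by
  have h1 : ∀ m ∈ Finset.range n, (1 + s/((m:ℝ)+1)) = (s + (m+1))/((m:ℝ)+1) := by
    intro m _
    field_simp
    ring
  rw [Finset.prod_congr rfl h1, Finset.prod_div_distrib]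
  clear h1
  have h2 : ∏ m ∈ Finset.range n, ((m:ℝ)+1) = n.factorial := by
    induction n with
    | zero => simp
    | succ n ih => rw [Finset.prod_range_succ, ih]; push_cast [Nat.factorial_succ]; ring
  have h3 : ∏ j ∈ Finset.range (n+1), (s + (j:ℝ)) =
      s * ∏ m ∈ Finset.range n, (s + ((m:ℝ)+1)) := by
    rw [Finset.prod_range_succ']
    push_cast
    ring
  rw [h2, h3, mul_div_mul_left _ _ hs.ne']

lemma gamma_lim (s : ℝ) (hs : 0 ≤ s) :
    Tendsto (fun n : ℕ => (∏ m ∈ Finset.range n, (1 + s/(m+1))) / ((n:ℝ)+1)^s)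
      atTop (𝓝 (Real.Gamma (1+s))⁻¹) := by
  rcases hs.eq_or_lt with rfl | hs
  · simp [Real.Gamma_one]
  have hG : Real.Gamma (1+s) = s * Real.Gamma s := by
    rw [add_comm, Real.Gamma_add_one hs.ne']
  have hGne : s * Real.Gamma s ≠ 0 :=
    mul_ne_zero hs.ne' (Real.Gamma_pos_of_pos hs).ne'
  have l1 : Tendsto (fun n : ℕ => (s * Real.GammaSeq s n)⁻¹) atTop (𝓝 (s * Real.Gamma s)⁻¹) :=
    ((tendsto_const_nhds.mul (Real.GammaSeq_tendsto_Gamma s)).inv₀ hGne)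
  have l2 : Tendsto (fun n : ℕ => ((n:ℝ)/((n:ℝ)+1))^s) atTop (𝓝 1) := by
    have h0 : Tendsto (fun n : ℕ => (n:ℝ)/((n:ℝ)+1)) atTop (𝓝 1) :=
      tendsto_natCast_div_add_atTop (1:ℝ)
    have := (Real.continuousAt_rpow_const 1 s (Or.inl one_ne_zero)).tendsto.comp h0
    simpa [Function.comp_def] using this
  have key := l1.mul l2
  rw [mul_one, ← hG] at key
  refine key.congr' ?_
  filter_upwards [eventually_ge_atTop 1] with n hn
  have hn0 : (0:ℝ) < n := by exact_mod_cast hn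
  have hfac : (0:ℝ) < n.factorial := by exact_mod_cast n.factorial_pos
  have hprod : (0:ℝ) < ∏ j ∈ Finset.range (n+1), (s + j) :=
    Finset.prod_pos fun j _ => by positivity
  have hGS : Real.GammaSeq s n = (n:ℝ)^s * n.factorial / ∏ j ∈ Finset.range (n+1), (s + j) := rfl
  rw [prod_eq s hs n, hGS]
  rw [Real.div_rpow hn0.le (by positivity)]
  have hrp : (0:ℝ) < (n:ℝ)^s := Real.rpow_pos_of_pos hn0 s
  have hrp1 : (0:ℝ) < ((n:ℝ)+1)^s := Real.rpow_pos_of_pos (by positivity) s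
  field_simp

end LazyAux

section Core
variable {Ω : Type*} {m0 : MeasurableSpace Ω} (μ : Measure Ω) [IsProbabilityMeasure μ]
    (ℱ : Filtration ℕ m0) (p : ℝ)
    (X : ℕ → Ω → ℕ)

lemma measH (hadp : ∀ n, Measurable[ℱ n] (X n)) (n : ℕ) :
    Measurable[ℱ n] (lazyH X n) := by
  unfold lazyH
  apply Finset.measurable_sum
  intro i hi
  exact (hadp i).mono (ℱ.mono (Finset.mem_Icc.1 hi).2) le_rfl

lemma hIntf (hadp : ∀ n, Measurable[ℱ n] (X n)) (hXval : ∀ n ω, X n ω ≤ 1)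
    (n : ℕ) (f : ℕ → ℕ) :
    Integrable (fun ω => (f (lazyH X n ω) : ℝ)) μ := by
  have hmeas : Measurable (fun ω => (f (lazyH X n ω) : ℝ)) :=
    (measurable_from_top (f := fun h : ℕ => (f h : ℝ))).comp
      ((measH ℱ X hadp n).mono (ℱ.le n) le_rfl)
  refine ⟨hmeas.aestronglyMeasurable, HasFiniteIntegral.of_bounded
    (C := (∑ i ∈ Finset.range (n+1), f i : ℕ)) (ae_of_all μ fun ω => ?_)⟩
  rw [Real.norm_eq_abs, abs_of_nonneg (by positivity)]
  have hb : lazyH X n ω ≤ n :=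
    calc lazyH X n ω ≤ ∑ i ∈ Finset.Icc 1 n, 1 := Finset.sum_le_sum fun i _ => hXval i ω
      _ = n := by simp
  have : f (lazyH X n ω) ≤ ∑ i ∈ Finset.range (n+1), f i :=
    Finset.single_le_sum (f := fun i => f i) (fun i _ => Nat.zero_le _)
      (Finset.mem_range.2 (Nat.lt_succ_of_le hb))
  exact_mod_cast this

lemma hH1ae (hX1 : ∀ᵐ ω ∂μ, X 1 ω = 1) (n : ℕ) (hn : 1 ≤ n) :
    ∀ᵐ ω ∂μ, 1 ≤ lazyH X n ω := by
  filter_upwards [hX1] with ω hω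
  have : X 1 ω ≤ lazyH X n ω :=
    Finset.single_le_sum (f := fun i => X i ω) (fun i _ => Nat.zero_le _)
      (Finset.mem_Icc.2 ⟨le_rfl, hn⟩)
  omega

lemma moment_rec (hadp : ∀ n, Measurable[ℱ n] (X n)) (hXval : ∀ n ω, X n ω ≤ 1)
    (hcond : ∀ n : ℕ, 1 ≤ n →
      μ[(fun ω => (X (n + 1) ω : ℝ)) | ℱ n] =ᵐ[μ]
        fun ω => p * (lazyH X n ω : ℝ) / n)
    (K n : ℕ) (hn : 1 ≤ n) :
    ∫ ω, ((lazyH X (n+1) ω).ascFactorial K : ℝ) ∂μ =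
      (1 + K * p / n) * ∫ ω, ((lazyH X n ω).ascFactorial K : ℝ) ∂μ := by
  obtain ⟨j, rfl⟩ | rfl : (∃ j, K = j + 1) ∨ K = 0 := by
    rcases K with _ | j
    · exact Or.inr rfl
    · exact Or.inl ⟨j, rfl⟩
  swap
  · simp [Nat.ascFactorial_zero]
  set H : Ω → ℕ := lazyH X n with hH
  set g : Ω → ℝ := fun ω => ((H ω + 1).ascFactorial j : ℝ) with hg
  set xf : Ω → ℝ := fun ω => (X (n+1) ω : ℝ) with hxf
  have hsplit : ∀ ω, lazyH X (n+1) ω = H ω + X (n+1) ω := by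
    intro ω
    exact Finset.sum_Icc_succ_top (by omega) _
  have hpt : ∀ ω, ((lazyH X (n+1) ω).ascFactorial (j+1) : ℝ)
      = ((H ω).ascFactorial (j+1) : ℝ) + ((j:ℝ)+1) * (xf ω * g ω) := by
    intro ω
    rw [hsplit ω]
    rcases Nat.le_one_iff_eq_zero_or_eq_one.1 (hXval (n+1) ω) with h0 | h1
    · simp [h0, hxf]
    · rw [h1, LazyAux.asc_step (H ω) j]
      push_cast [hxf, h1, hg]
      ring
  have hint_asc : Integrable (fun ω => ((H ω).ascFactorial (j+1) : ℝ)) μ :=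
    hIntf μ ℱ X hadp hXval n (fun h => h.ascFactorial (j+1))
  have hint_g : Integrable g μ := hIntf μ ℱ X hadp hXval n (fun h => (h+1).ascFactorial j)
  have hxf_meas : Measurable xf :=
    (measurable_from_top (f := fun h : ℕ => (h : ℝ))).comp
      ((hadp (n+1)).mono (ℱ.le (n+1)) le_rfl)
  have hxf_bdd : ∀ ω, ‖xf ω‖ ≤ 1 := by
    intro ω
    rw [Real.norm_eq_abs, abs_of_nonneg (by positivity)]
    simp only [hxf]
    exact_mod_cast hXval (n+1) ω
  have hint_xg : Integrable (fun ω => xf ω * g ω) μ :=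
    hint_g.bdd_mul hxf_meas.aestronglyMeasurable (ae_of_all μ hxf_bdd)
  have hint_gx : Integrable (g * xf) μ := by
    have : g * xf = fun ω => xf ω * g ω := by ext ω; exact mul_comm _ _
    rw [this]; exact hint_xg
  have hg_sm : StronglyMeasurable[ℱ n] g :=
    ((measurable_from_top (f := fun h : ℕ => ((h+1).ascFactorial j : ℝ))).comp
      (measH ℱ X hadp n)).stronglyMeasurable
  have hxf_int : Integrable xf μ :=
    ⟨hxf_meas.aestronglyMeasurable, HasFiniteIntegral.of_bounded (C := 1) (ae_of_all μ hxf_bdd)⟩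
  have hpull : μ[g * xf | ℱ n] =ᵐ[μ] g * μ[xf | ℱ n] :=
    condExp_mul_of_stronglyMeasurable_left hg_sm hint_gx hxf_int
  have hkey : ∫ ω, xf ω * g ω ∂μ = ∫ ω, (p * (H ω : ℝ) / n) * g ω ∂μ := by
    have e1 : ∫ ω, xf ω * g ω ∂μ = ∫ ω, (g * xf) ω ∂μ := by
      congr 1; ext ω; exact mul_comm _ _
    have e2 : ∫ ω, (μ[g * xf | ℱ n]) ω ∂μ = ∫ ω, (g * xf) ω ∂μ :=
      integral_condExp (ℱ.le n)
    have e3 : μ[g * xf | ℱ n] =ᵐ[μ] fun ω => (p * (H ω : ℝ) / n) * g ω := by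
      refine hpull.trans ?_
      filter_upwards [hcond n hn] with ω hω
      simp only [Pi.mul_apply]
      rw [hω]
      exact mul_comm _ _
    rw [e1, ← e2, integral_congr_ae e3]
  have hHg : ∀ ω, (p * (H ω : ℝ) / n) * g ω = (p / n) * ((H ω).ascFactorial (j+1) : ℝ) := by
    intro ω
    have : (H ω : ℝ) * g ω = ((H ω).ascFactorial (j+1) : ℝ) := by
      simp only [hg]
      exact_mod_cast congrArg (Nat.cast : ℕ → ℝ) (LazyAux.asc_mul (H ω) j)
    calc (p * (H ω : ℝ) / n) * g ω = (p / n) * ((H ω : ℝ) * g ω) := by ring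
      _ = (p / n) * ((H ω).ascFactorial (j+1) : ℝ) := by rw [this]
  calc ∫ ω, ((lazyH X (n+1) ω).ascFactorial (j+1) : ℝ) ∂μ
      = ∫ ω, (((H ω).ascFactorial (j+1) : ℝ) + ((j:ℝ)+1) * (xf ω * g ω)) ∂μ := by
        exact integral_congr_ae (ae_of_all μ hpt)
    _ = (∫ ω, ((H ω).ascFactorial (j+1) : ℝ) ∂μ) + ((j:ℝ)+1) * ∫ ω, xf ω * g ω ∂μ := by
        rw [integral_add hint_asc (hint_xg.const_mul _), integral_const_mul _ _]
    _ = (∫ ω, ((H ω).ascFactorial (j+1) : ℝ) ∂μ)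
        + ((j:ℝ)+1) * ((p/n) * ∫ ω, ((H ω).ascFactorial (j+1) : ℝ) ∂μ) := by
        rw [hkey, integral_congr_ae (ae_of_all μ hHg), integral_const_mul _ _]
    _ = (1 + (↑(j+1)) * p / n) * ∫ ω, ((H ω).ascFactorial (j+1) : ℝ) ∂μ := by
        push_cast
        ring

lemma moment_closed (hadp : ∀ n, Measurable[ℱ n] (X n)) (hXval : ∀ n ω, X n ω ≤ 1)
    (hX1 : ∀ᵐ ω ∂μ, X 1 ω = 1)
    (hcond : ∀ n : ℕ, 1 ≤ n →
      μ[(fun ω => (X (n + 1) ω : ℝ)) | ℱ n] =ᵐ[μ]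
        fun ω => p * (lazyH X n ω : ℝ) / n)
    (K : ℕ) : ∀ n : ℕ,
    ∫ ω, ((lazyH X (n+1) ω).ascFactorial K : ℝ) ∂μ =
      K.factorial * ∏ m ∈ Finset.range n, (1 + K * p / (m+1)) := by
  intro n
  induction n with
  | zero =>
    simp only [Finset.range_zero, Finset.prod_empty, mul_one]
    have hae : ∀ᵐ ω ∂μ, ((lazyH X 1 ω).ascFactorial K : ℝ) = (K.factorial : ℝ) := by
      filter_upwards [hX1] with ω hω
      have : lazyH X 1 ω = 1 := by
        unfold lazyH
        rw [Finset.Icc_self, Finset.sum_singleton, hω]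
      rw [this, Nat.one_ascFactorial]
    rw [integral_congr_ae hae, integral_const]
    simp
  | succ n ih =>
    rw [moment_rec μ ℱ p X hadp hXval hcond K (n+1) (by omega), ih,
      Finset.prod_range_succ]
    push_cast
    ring

end Core
theorem stmt7 {Ω : Type*} {m0 : MeasurableSpace Ω} (μ : Measure Ω) [IsProbabilityMeasure μ]
    (ℱ : Filtration ℕ m0) (p : ℝ) (hp : 0 < p) (hp1 : p < 1)
    (X : ℕ → Ω → ℕ)
    (hXval : ∀ n ω, X n ω ≤ 1)
    (hX1 : ∀ᵐ ω ∂μ, X 1 ω = 1)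
    (hadp : ∀ n, Measurable[ℱ n] (X n))
    (hcond : ∀ n : ℕ, 1 ≤ n →
      μ[(fun ω => (X (n + 1) ω : ℝ)) | ℱ n] =ᵐ[μ]
        fun ω => p * (lazyH X n ω : ℝ) / n) :
    ∀ k : ℕ, 1 ≤ k →
      Tendsto (fun n : ℕ => ∫ ω, ((lazyH X n ω : ℝ) / (n : ℝ) ^ p) ^ k ∂μ)
        atTop (nhds ((k.factorial : ℝ) / Real.Gamma (1 + k * p))) := by
  intro k hk
  obtain ⟨j, rfl⟩ : ∃ j, k = j + 1 := ⟨k - 1, by omega⟩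
  set k := j + 1 with hkdef
  set s : ℝ := (k : ℝ) * p with hs
  have hspos : 0 < s := by positivity
  -- abbreviations
  set A : ℕ → ℝ := fun n => ∫ ω, ((lazyH X (n+1) ω).ascFactorial k : ℝ) ∂μ with hA
  set Aj : ℕ → ℝ := fun n => ∫ ω, ((lazyH X (n+1) ω).ascFactorial j : ℝ) ∂μ with hAj
  set I : ℕ → ℝ := fun n => ∫ ω, ((lazyH X (n+1) ω : ℝ))^k ∂μ with hI
  have hc0 : ∀ n : ℕ, (0:ℝ) < (n:ℝ)+1 := fun n => by positivity
  have hcpos : ∀ n : ℕ, (0:ℝ) < ((n:ℝ)+1)^s := fun n => Real.rpow_pos_of_pos (hc0 n) s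
  -- closed forms
  have hAeq : ∀ n : ℕ, A n = k.factorial * ∏ m ∈ Finset.range n, (1 + s / (m+1)) := by
    intro n
    exact moment_closed μ ℱ p X hadp hXval hX1 hcond k n
  have hAjeq : ∀ n : ℕ, Aj n = j.factorial * ∏ m ∈ Finset.range n, (1 + (j:ℝ)*p / (m+1)) := by
    intro n
    exact moment_closed μ ℱ p X hadp hXval hX1 hcond j n
  -- limit of A n / (n+1)^s
  have limA : Tendsto (fun n => A n / ((n:ℝ)+1)^s) atTop
      (𝓝 ((k.factorial : ℝ) / Real.Gamma (1 + s))) := by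
    have := (LazyAux.gamma_lim s hspos.le).const_mul (k.factorial : ℝ)
    rw [← div_eq_mul_inv] at this
    refine this.congr fun n => ?_
    rw [hAeq n, mul_div_assoc]
  -- limit of Aj n / (n+1)^(j*p)
  have limAj : Tendsto (fun n => Aj n / ((n:ℝ)+1)^((j:ℝ)*p)) atTop
      (𝓝 ((j.factorial : ℝ) / Real.Gamma (1 + (j:ℝ)*p))) := by
    have := (LazyAux.gamma_lim ((j:ℝ)*p) (by positivity)).const_mul (j.factorial : ℝ)
    rw [← div_eq_mul_inv] at this
    refine this.congr fun n => ?_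
    rw [hAjeq n, mul_div_assoc]
  -- limit of (n+1)^(-p)
  have limNegP : Tendsto (fun n : ℕ => ((n:ℝ)+1)^(-p)) atTop (𝓝 0) := by
    have h1 : Tendsto (fun n : ℕ => (n:ℝ)+1) atTop atTop :=
      tendsto_atTop_add_const_right atTop 1 tendsto_natCast_atTop_atTop
    exact (tendsto_rpow_neg_atTop hp).comp h1
  -- integrability and bounds
  have hint_asck : ∀ n : ℕ, Integrable (fun ω => ((lazyH X (n+1) ω).ascFactorial k : ℝ)) μ :=
    fun n => hIntf μ ℱ X hadp hXval (n+1) (fun h => h.ascFactorial k)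
  have hint_ascj : ∀ n : ℕ, Integrable (fun ω => ((lazyH X (n+1) ω).ascFactorial j : ℝ)) μ :=
    fun n => hIntf μ ℱ X hadp hXval (n+1) (fun h => (h).ascFactorial j)
  have hint_pow : ∀ n : ℕ, Integrable (fun ω => ((lazyH X (n+1) ω : ℝ))^k) μ := by
    intro n
    have := hIntf μ ℱ X hadp hXval (n+1) (fun h => h^k)
    refine this.congr (ae_of_all μ fun ω => ?_)
    push_cast
    ring
  -- I n ≤ A n
  have hIA : ∀ n : ℕ, I n ≤ A n := by
    intro n
    refine integral_mono (hint_pow n) (hint_asck n) fun ω => ?_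
    have := Nat.pow_succ_le_ascFactorial (lazyH X (n+1) ω) k
    calc ((lazyH X (n+1) ω : ℝ))^k = (((lazyH X (n+1) ω)^k : ℕ) : ℝ) := by push_cast; ring
      _ ≤ ((lazyH X (n+1) ω).ascFactorial k : ℝ) := by exact_mod_cast this
  -- error bound : A n - I n ≤ C * Aj n
  obtain ⟨C, hC⟩ := LazyAux.asc_err j
  have hAI : ∀ n : ℕ, A n ≤ I n + (C:ℝ) * Aj n := by
    intro n
    have hub : ∀ᵐ ω ∂μ, ((lazyH X (n+1) ω).ascFactorial k : ℝ) ≤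
        ((lazyH X (n+1) ω : ℝ))^k + (C:ℝ) * ((lazyH X (n+1) ω).ascFactorial j : ℝ) := by
      filter_upwards [hH1ae μ X hX1 (n+1) (by omega)] with ω hω
      have := hC (lazyH X (n+1) ω) hω
      have hcast : (((lazyH X (n+1) ω)^k + C * (lazyH X (n+1) ω).ascFactorial j : ℕ) : ℝ) =
          ((lazyH X (n+1) ω : ℝ))^k + (C:ℝ) * ((lazyH X (n+1) ω).ascFactorial j : ℝ) := by
        push_cast; ring
      rw [← hcast]
      exact_mod_cast this
    calc A n ≤ ∫ ω, (((lazyH X (n+1) ω : ℝ))^k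
          + (C:ℝ) * ((lazyH X (n+1) ω).ascFactorial j : ℝ)) ∂μ :=
        integral_mono_ae (hint_asck n) ((hint_pow n).add ((hint_ascj n).const_mul _)) hub
      _ = I n + (C:ℝ) * Aj n := by
        rw [integral_add (hint_pow n) ((hint_ascj n).const_mul _), integral_const_mul _ _]
  -- err n → 0 by squeeze
  set err : ℕ → ℝ := fun n => (A n - I n) / ((n:ℝ)+1)^s with herr
  have herr_nonneg : ∀ n, 0 ≤ err n := fun n =>
    div_nonneg (sub_nonneg.2 (hIA n)) (hcpos n).le
  have herr_ub : ∀ n, err n ≤ (C:ℝ) * (Aj n / ((n:ℝ)+1)^((j:ℝ)*p)) * ((n:ℝ)+1)^(-p) := by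
    intro n
    have h1 : err n ≤ (C:ℝ) * Aj n / ((n:ℝ)+1)^s := by
      show (A n - I n) / ((n:ℝ)+1)^s ≤ (C:ℝ) * Aj n / ((n:ℝ)+1)^s
      gcongr
      linarith [hAI n]
    refine h1.trans_eq ?_
    have hsplitpow : ((n:ℝ)+1)^s = ((n:ℝ)+1)^((j:ℝ)*p) * ((n:ℝ)+1)^p := by
      rw [← Real.rpow_add (hc0 n)]
      congr 1
      rw [hs, hkdef]
      push_cast
      ring
    rw [hsplitpow, Real.rpow_neg (hc0 n).le]
    have h2 : (0:ℝ) < ((n:ℝ)+1)^((j:ℝ)*p) := Real.rpow_pos_of_pos (hc0 n) _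
    have h3 : (0:ℝ) < ((n:ℝ)+1)^p := Real.rpow_pos_of_pos (hc0 n) _
    field_simp
  have limUB : Tendsto (fun n => (C:ℝ) * (Aj n / ((n:ℝ)+1)^((j:ℝ)*p)) * ((n:ℝ)+1)^(-p))
      atTop (𝓝 0) := by
    have := ((tendsto_const_nhds (x := (C:ℝ))).mul limAj).mul limNegP
    simpa using this
  have limErr : Tendsto err atTop (𝓝 0) :=
    tendsto_of_tendsto_of_tendsto_of_le_of_le tendsto_const_nhds limUB herr_nonneg herr_ub
  -- the target sequence at n+1
  have hTeq : ∀ n : ℕ, (∫ ω, ((lazyH X (n+1) ω : ℝ) / ((n+1 : ℕ) : ℝ) ^ p) ^ k ∂μ)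
      = A n / ((n:ℝ)+1)^s - err n := by
    intro n
    have hpow : (((n+1:ℕ):ℝ)^p)^k = ((n:ℝ)+1)^s := by
      push_cast
      rw [← Real.rpow_natCast (((n:ℝ)+1)^p) k, ← Real.rpow_mul (hc0 n).le]
      rw [hs]
      congr 1
      push_cast
      ring
    have hint : ∀ ω, ((lazyH X (n+1) ω : ℝ) / ((n+1 : ℕ) : ℝ) ^ p) ^ k
        = ((lazyH X (n+1) ω : ℝ))^k / ((n:ℝ)+1)^s := by
      intro ω
      rw [div_pow, hpow]
    rw [integral_congr_ae (ae_of_all μ hint), integral_div]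
    rw [herr]
    field_simp
    rw [sub_sub_cancel]
  have hT : Tendsto (fun n : ℕ => ∫ ω, ((lazyH X (n+1) ω : ℝ) / ((n+1 : ℕ) : ℝ) ^ p) ^ k ∂μ)
      atTop (𝓝 ((k.factorial : ℝ) / Real.Gamma (1 + k * p))) := by
    have := limA.sub limErr
    rw [sub_zero] at this
    exact this.congr fun n => (hTeq n).symm
  exact (tendsto_add_atTop_iff_nat 1).1 hT
end

section
/- For the laziest minimal random walk with parameter p ∈ (0,1): E[H_n] = a_n^{(1)}, E[H_n^2] = 2a_n^{(2)} - a_n^{(1)}, E[H_n^3] = 6a_n^{(3)} - 6a_n^{(2)} + a_n^{(1)}, and E[H_n^4] = 24a_n^{(4)} - 36a_n^{(3)} + 14a_n^{(2)} - a_n^{(1)}, where a_n^{(k)} = Γ(n+kp)/(Γ(n)Γ(1+kp)). -/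
open MeasureTheory ProbabilityTheory Filter Real

section Aux

lemma lazyH_le {Ω : Type*} {X : ℕ → Ω → ℕ} (hXval : ∀ n ω, X n ω ≤ 1) (n : ℕ) (ω : Ω) :
    lazyH X n ω ≤ n := by
  calc lazyH X n ω ≤ ∑ _i ∈ Finset.Icc 1 n, 1 :=
        Finset.sum_le_sum fun i _ => hXval i ω
    _ = n := by simp

lemma lazyH_succ {Ω : Type*} (X : ℕ → Ω → ℕ) (n : ℕ) (ω : Ω) :
    lazyH X (n + 1) ω = lazyH X n ω + X (n + 1) ω := by
  unfold lazyH
  rw [← Finset.sum_Icc_succ_top (by omega : 1 ≤ n + 1)]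

lemma aSeqK_one {p : ℝ} (hp : 0 < p) (k : ℕ) : aSeqK p k 1 = 1 := by
  have h1 : (0:ℝ) < 1 + k * p := by positivity
  simp [aSeqK, Real.Gamma_one, div_self (ne_of_gt (Real.Gamma_pos_of_pos h1))]

lemma aSeqK_succ {p : ℝ} (hp : 0 < p) (k n : ℕ) (hn : 1 ≤ n) :
    aSeqK p k (n + 1) = aSeqK p k n * (((n : ℝ) + k * p) / n) := by
  have hn0 : (0:ℝ) < n := by exact_mod_cast hn
  have hnp : (0:ℝ) < (n : ℝ) + k * p := by positivity
  have h1 : Real.Gamma ((n : ℝ) + k * p + 1) = ((n : ℝ) + k * p) * Real.Gamma ((n : ℝ) + k * p) :=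
    Real.Gamma_add_one (ne_of_gt hnp)
  have h2 : Real.Gamma ((n : ℝ) + 1) = (n : ℝ) * Real.Gamma n :=
    Real.Gamma_add_one (ne_of_gt hn0)
  have hΓn : Real.Gamma (n : ℝ) ≠ 0 := ne_of_gt (Real.Gamma_pos_of_pos hn0)
  have hΓk : Real.Gamma (1 + k * p) ≠ 0 := ne_of_gt (Real.Gamma_pos_of_pos (by positivity))
  unfold aSeqK
  push_cast
  rw [show (n:ℝ) + 1 + k * p = (n : ℝ) + k * p + 1 by ring, h1, h2]
  field_simp

end Aux

theorem stmt8 {Ω : Type*} {m0 : MeasurableSpace Ω} (μ : Measure Ω) [IsProbabilityMeasure μ]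
    (ℱ : Filtration ℕ m0) (p : ℝ) (hp : 0 < p) (hp1 : p < 1)
    (X : ℕ → Ω → ℕ)
    (hXval : ∀ n ω, X n ω ≤ 1)
    (hX1 : ∀ᵐ ω ∂μ, X 1 ω = 1)
    (hadp : ∀ n, Measurable[ℱ n] (X n))
    (hcond : ∀ n : ℕ, 1 ≤ n →
      μ[(fun ω => (X (n + 1) ω : ℝ)) | ℱ n] =ᵐ[μ]
        fun ω => p * (lazyH X n ω : ℝ) / n) :
    ∀ n : ℕ, 1 ≤ n →
      (∫ ω, (lazyH X n ω : ℝ) ∂μ = aSeqK p 1 n) ∧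
      (∫ ω, (lazyH X n ω : ℝ) ^ 2 ∂μ = 2 * aSeqK p 2 n - aSeqK p 1 n) ∧
      (∫ ω, (lazyH X n ω : ℝ) ^ 3 ∂μ = 6 * aSeqK p 3 n - 6 * aSeqK p 2 n + aSeqK p 1 n) ∧
      (∫ ω, (lazyH X n ω : ℝ) ^ 4 ∂μ =
        24 * aSeqK p 4 n - 36 * aSeqK p 3 n + 14 * aSeqK p 2 n - aSeqK p 1 n) := by
  -- measurability facts
  have hHmeasF : ∀ n, Measurable[ℱ n] (lazyH X n) := by
    intro n
    apply Finset.measurable_sum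
    intro i hi
    exact (hadp i).mono (ℱ.mono (Finset.mem_Icc.mp hi).2) le_rfl
  have hHmeas : ∀ n, Measurable (lazyH X n) :=
    fun n => (hHmeasF n).mono (ℱ.le n) le_rfl
  -- integrability of any composite with lazyH
  have int_comp : ∀ (n : ℕ) (φ : ℕ → ℝ), Integrable (fun ω => φ (lazyH X n ω)) μ := by
    intro n φ
    refine (integrable_const (∑ j ∈ Finset.range (n + 1), |φ j|)).mono'
      (measurable_from_top.comp (hHmeas n)).aestronglyMeasurable (ae_of_all _ fun ω => ?_)
    rw [Real.norm_eq_abs]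
    exact Finset.single_le_sum (f := fun j => |φ j|) (fun j _ => abs_nonneg _)
      (Finset.mem_range.mpr (by have := lazyH_le hXval n ω; omega))
  have hXmeas : ∀ n, Measurable (fun ω => (X n ω : ℝ)) :=
    fun n => measurable_from_top.comp ((hadp n).mono (ℱ.le n) le_rfl)
  have int_comp_mul : ∀ (n : ℕ) (φ : ℕ → ℝ),
      Integrable (fun ω => φ (lazyH X n ω) * (X (n + 1) ω : ℝ)) μ := by
    intro n φ
    refine (integrable_const (∑ j ∈ Finset.range (n + 1), |φ j|)).mono'
      (((measurable_from_top.comp (hHmeas n)).mul (hXmeas (n + 1)))).aestronglyMeasurable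
      (ae_of_all _ fun ω => ?_)
    rw [Real.norm_eq_abs, abs_mul]
    have h1 : |φ (lazyH X n ω)| ≤ ∑ j ∈ Finset.range (n + 1), |φ j| :=
      Finset.single_le_sum (f := fun j => |φ j|) (fun j _ => abs_nonneg _)
        (Finset.mem_range.mpr (by have := lazyH_le hXval n ω; omega))
    have h2 : |(X (n + 1) ω : ℝ)| ≤ 1 := by
      rw [abs_of_nonneg (by positivity)]
      exact_mod_cast hXval (n + 1) ω
    calc |φ (lazyH X n ω)| * |(X (n + 1) ω : ℝ)| ≤ |φ (lazyH X n ω)| * 1 := by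
          exact mul_le_mul_of_nonneg_left h2 (abs_nonneg _)
      _ ≤ _ := by simpa using h1
  -- the key recursion step
  have step : ∀ (n : ℕ), 1 ≤ n → ∀ (φ : ℕ → ℝ),
      ∫ ω, φ (lazyH X (n + 1) ω) ∂μ
        = ∫ ω, φ (lazyH X n ω) ∂μ
          + ∫ ω, (φ (lazyH X n ω + 1) - φ (lazyH X n ω)) * (p * (lazyH X n ω : ℝ) / n) ∂μ := by
    intro n hn φ
    set f : Ω → ℝ := fun ω => φ (lazyH X n ω + 1) - φ (lazyH X n ω) with hf
    have hfm : StronglyMeasurable[ℱ n] f := by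
      have hfc : f = (fun j : ℕ => φ (j + 1) - φ j) ∘ (lazyH X n) := rfl
      rw [hfc]
      exact (measurable_from_top.comp (hHmeasF n)).stronglyMeasurable
    have hfX : Integrable (fun ω => f ω * (X (n + 1) ω : ℝ)) μ :=
      (int_comp_mul n (fun j => φ (j + 1) - φ j))
    have hXint : Integrable (fun ω => (X (n + 1) ω : ℝ)) μ := by
      refine (integrable_const (1:ℝ)).mono' (hXmeas (n + 1)).aestronglyMeasurable
        (ae_of_all _ fun ω => ?_)
      rw [Real.norm_eq_abs, abs_of_nonneg (by positivity)]
      exact_mod_cast hXval (n + 1) ω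
    have hpt : ∀ ω, φ (lazyH X (n + 1) ω) = φ (lazyH X n ω) + f ω * (X (n + 1) ω : ℝ) := by
      intro ω
      rw [lazyH_succ]
      rcases Nat.le_one_iff_eq_zero_or_eq_one.mp (hXval (n + 1) ω) with h | h <;>
        rw [h] <;> simp [hf]
    have key : ∫ ω, f ω * (X (n + 1) ω : ℝ) ∂μ
        = ∫ ω, f ω * (p * (lazyH X n ω : ℝ) / n) ∂μ := by
      have h1 := condExp_mul_of_stronglyMeasurable_left (μ := μ) hfm hfX hXint
      have h2 : (f * μ[(fun ω => (X (n + 1) ω : ℝ)) | ℱ n]) =ᵐ[μ]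
          fun ω => f ω * (p * (lazyH X n ω : ℝ) / n) := by
        filter_upwards [hcond n hn] with ω hω
        simp [hω]
      calc ∫ ω, f ω * (X (n + 1) ω : ℝ) ∂μ
          = ∫ ω, (μ[(fun ω => f ω * (X (n + 1) ω : ℝ)) | ℱ n]) ω ∂μ :=
            (integral_condExp (ℱ.le n)).symm
        _ = ∫ ω, f ω * (p * (lazyH X n ω : ℝ) / n) ∂μ :=
            integral_congr_ae (h1.trans h2)
    calc ∫ ω, φ (lazyH X (n + 1) ω) ∂μ
        = ∫ ω, (φ (lazyH X n ω) + f ω * (X (n + 1) ω : ℝ)) ∂μ := by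
          exact integral_congr_ae (ae_of_all _ hpt)
      _ = ∫ ω, φ (lazyH X n ω) ∂μ + ∫ ω, f ω * (X (n + 1) ω : ℝ) ∂μ :=
          integral_add (int_comp n φ) hfX
      _ = _ := by rw [key]
  -- main induction
  refine Nat.le_induction ?_ ?_
  · -- base case n = 1
    have hae : ∀ᵐ ω ∂μ, (lazyH X 1 ω : ℝ) = 1 := by
      filter_upwards [hX1] with ω hω
      simp [lazyH, hω]
    have hint : ∀ k : ℕ, ∫ ω, (lazyH X 1 ω : ℝ) ^ k ∂μ = 1 := by
      intro k
      rw [integral_congr_ae (g := fun _ => (1:ℝ))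
        (by filter_upwards [hae] with ω hω; rw [hω, one_pow])]
      simp
    have h1 := hint 1
    simp only [pow_one] at h1
    refine ⟨?_, ?_, ?_, ?_⟩ <;>
      simp only [h1, hint 2, hint 3, hint 4, aSeqK_one hp] <;> norm_num
  · -- inductive step
    intro n hn IH
    obtain ⟨IH1, IH2, IH3, IH4⟩ := IH
    have hn0 : (n:ℝ) ≠ 0 := by positivity
    set m1 := ∫ ω, (lazyH X n ω : ℝ) ∂μ with hm1
    set m2 := ∫ ω, (lazyH X n ω : ℝ) ^ 2 ∂μ with hm2
    set m3 := ∫ ω, (lazyH X n ω : ℝ) ^ 3 ∂μ with hm3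
    set m4 := ∫ ω, (lazyH X n ω : ℝ) ^ 4 ∂μ with hm4
    have intpow : ∀ k : ℕ, Integrable (fun ω => (lazyH X n ω : ℝ) ^ k) μ :=
      fun k => int_comp n (fun j => (j : ℝ) ^ k)
    have split : ∀ c4 c3 c2 c1 : ℝ,
        ∫ ω, (c4 * (lazyH X n ω : ℝ) ^ 4 + c3 * (lazyH X n ω : ℝ) ^ 3
          + c2 * (lazyH X n ω : ℝ) ^ 2 + c1 * (lazyH X n ω : ℝ)) ∂μ
          = c4 * m4 + c3 * m3 + c2 * m2 + c1 * m1 := by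
      intro c4 c3 c2 c1
      have i1 : Integrable (fun ω => c1 * (lazyH X n ω : ℝ)) μ :=
        int_comp n fun j => c1 * (j : ℝ)
      have i2 : Integrable (fun ω => c2 * (lazyH X n ω : ℝ) ^ 2) μ :=
        int_comp n fun j => c2 * (j : ℝ) ^ 2
      have i3 : Integrable (fun ω => c3 * (lazyH X n ω : ℝ) ^ 3) μ :=
        int_comp n fun j => c3 * (j : ℝ) ^ 3
      have i4 : Integrable (fun ω => c4 * (lazyH X n ω : ℝ) ^ 4) μ :=
        int_comp n fun j => c4 * (j : ℝ) ^ 4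
      have i34 : Integrable (fun ω => c4 * (lazyH X n ω : ℝ) ^ 4
          + c3 * (lazyH X n ω : ℝ) ^ 3) μ := i4.add i3
      have i234 : Integrable (fun ω => c4 * (lazyH X n ω : ℝ) ^ 4
          + c3 * (lazyH X n ω : ℝ) ^ 3 + c2 * (lazyH X n ω : ℝ) ^ 2) μ := i34.add i2
      rw [integral_add i234 i1, integral_add i34 i2, integral_add i4 i3,
        integral_const_mul, integral_const_mul, integral_const_mul, integral_const_mul]
    -- compute each moment at n+1
    have comp : ∀ (k : ℕ) (c4 c3 c2 c1 : ℝ),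
        (∀ ω : Ω, (((lazyH X n ω + 1 : ℕ) : ℝ) ^ k - ((lazyH X n ω : ℕ) : ℝ) ^ k)
            * (p * (lazyH X n ω : ℝ) / n)
          = (c4 * (lazyH X n ω : ℝ) ^ 4 + c3 * (lazyH X n ω : ℝ) ^ 3
              + c2 * (lazyH X n ω : ℝ) ^ 2 + c1 * (lazyH X n ω : ℝ))
            - (lazyH X n ω : ℝ) ^ k) →
        ∫ ω, (lazyH X (n + 1) ω : ℝ) ^ k ∂μ = c4 * m4 + c3 * m3 + c2 * m2 + c1 * m1 := by
      intro k c4 c3 c2 c1 hpt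
      have hs := step n hn (fun j => (j : ℝ) ^ k)
      rw [hs]
      have ipoly : Integrable (fun ω => c4 * (lazyH X n ω : ℝ) ^ 4
          + c3 * (lazyH X n ω : ℝ) ^ 3 + c2 * (lazyH X n ω : ℝ) ^ 2
          + c1 * (lazyH X n ω : ℝ)) μ :=
        int_comp n fun j => c4 * (j : ℝ) ^ 4 + c3 * (j : ℝ) ^ 3 + c2 * (j : ℝ) ^ 2 + c1 * (j : ℝ)
      have hcg : ∫ ω, (((lazyH X n ω + 1 : ℕ) : ℝ) ^ k - ((lazyH X n ω : ℕ) : ℝ) ^ k)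
            * (p * (lazyH X n ω : ℝ) / n) ∂μ
          = ∫ ω, ((c4 * (lazyH X n ω : ℝ) ^ 4 + c3 * (lazyH X n ω : ℝ) ^ 3
              + c2 * (lazyH X n ω : ℝ) ^ 2 + c1 * (lazyH X n ω : ℝ))
            - (lazyH X n ω : ℝ) ^ k) ∂μ := integral_congr_ae (ae_of_all _ hpt)
      rw [hcg, integral_sub ipoly (intpow k), split c4 c3 c2 c1]
      ring
    have e1 : ∫ ω, (lazyH X (n + 1) ω : ℝ) ∂μ = (1 + p / n) * m1 := by
      have := comp 1 0 0 0 (1 + p / n) (fun ω => by push_cast; field_simp; ring)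
      simpa using this
    have e2 : ∫ ω, (lazyH X (n + 1) ω : ℝ) ^ 2 ∂μ = (1 + 2 * p / n) * m2 + (p / n) * m1 := by
      have := comp 2 0 0 (1 + 2 * p / n) (p / n) (fun ω => by push_cast; field_simp; ring)
      simpa using this
    have e3 : ∫ ω, (lazyH X (n + 1) ω : ℝ) ^ 3 ∂μ
        = (1 + 3 * p / n) * m3 + (3 * p / n) * m2 + (p / n) * m1 := by
      have := comp 3 0 (1 + 3 * p / n) (3 * p / n) (p / n)
        (fun ω => by push_cast; field_simp; ring)
      simpa [add_assoc] using this
    have e4 : ∫ ω, (lazyH X (n + 1) ω : ℝ) ^ 4 ∂μ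
        = (1 + 4 * p / n) * m4 + (6 * p / n) * m3 + (4 * p / n) * m2 + (p / n) * m1 :=
      comp 4 (1 + 4 * p / n) (6 * p / n) (4 * p / n) (p / n)
        (fun ω => by push_cast; field_simp; ring)
    rw [IH1] at *
    refine ⟨?_, ?_, ?_, ?_⟩
    · rw [e1, aSeqK_succ hp 1 n hn]
      field_simp
      ring
    · rw [e2, IH2, aSeqK_succ hp 2 n hn, aSeqK_succ hp 1 n hn]
      field_simp
      ring
    · rw [e3, IH3, IH2, aSeqK_succ hp 3 n hn, aSeqK_succ hp 2 n hn, aSeqK_succ hp 1 n hn]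
      field_simp
      ring
    · rw [e4, IH4, IH3, IH2, aSeqK_succ hp 4 n hn, aSeqK_succ hp 3 n hn,
        aSeqK_succ hp 2 n hn, aSeqK_succ hp 1 n hn]
      field_simp
      ring
end

section
/- For the laziest minimal random walk with parameter p ∈ (0,1), E[(d_k)^2] ~ p/(k·a_k) as k → ∞, where d_k = M_k - M_{k-1} are the martingale differences of M_n = (H_n - E[H_n])/a_n; consequently s_n^2 := Σ_{k=n}^∞ E[(d_k)^2] ~ 1/a_n as n → ∞. -/
open MeasureTheory ProbabilityTheory Filter Real

/-- The centered, normalized position `M n = (H n - E[H n]) / a n`. -/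
noncomputable def lazyM {Ω : Type*} [MeasurableSpace Ω] (μ : MeasureTheory.Measure Ω)
    (p : ℝ) (X : ℕ → Ω → ℕ) (n : ℕ) (ω : Ω) : ℝ :=
  ((lazyH X n ω : ℝ) - ∫ ω', (lazyH X n ω' : ℝ) ∂μ) / aSeq p n

/-- Martingale difference `d k = M k - M (k-1)`. -/
noncomputable def lazyD {Ω : Type*} [MeasurableSpace Ω] (μ : MeasureTheory.Measure Ω)
    (p : ℝ) (X : ℕ → Ω → ℕ) (k : ℕ) (ω : Ω) : ℝ :=
  lazyM μ p X k ω - lazyM μ p X (k - 1) ω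

section aux

lemma aSeq_pos {p : ℝ} (hp : 0 < p) {n : ℕ} (hn : 1 ≤ n) : 0 < aSeq p n := by
  have hn0 : (0:ℝ) < n := by exact_mod_cast hn
  exact div_pos (Real.Gamma_pos_of_pos (by linarith)) (mul_pos (Real.Gamma_pos_of_pos hn0)
    (Real.Gamma_pos_of_pos (by linarith)))

lemma aSeq_nonneg {p : ℝ} (hp : 0 < p) (n : ℕ) : 0 ≤ aSeq p n := by
  cases n with
  | zero => simp [aSeq, Real.Gamma_zero]
  | succ m => exact (aSeq_pos hp (Nat.succ_le_succ (Nat.zero_le m))).le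

lemma aSeq_one {p : ℝ} (hp : 0 < p) : aSeq p 1 = 1 := by
  have h1 : Real.Gamma ((1:ℕ):ℝ) = 1 := by norm_num [Real.Gamma_one]
  have h2 : Real.Gamma (1 + p) ≠ 0 := (Real.Gamma_pos_of_pos (by linarith)).ne'
  simp only [aSeq, Nat.cast_one, h1]
  rw [add_comm (1:ℝ) p] at h2 ⊢
  field_simp
  exact Real.Gamma_one.symm

lemma aSeq_succ {p : ℝ} (hp : 0 < p) {n : ℕ} (hn : 1 ≤ n) :
    aSeq p (n + 1) = aSeq p n * ((n + p) / n) := by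
  have hn0 : (0:ℝ) < n := by exact_mod_cast hn
  have h1 : Real.Gamma (((n:ℝ) + 1) + p) = ((n:ℝ) + p) * Real.Gamma ((n:ℝ) + p) := by
    rw [show ((n:ℝ) + 1) + p = ((n:ℝ) + p) + 1 by ring, Real.Gamma_add_one (by positivity)]
  have h2 : Real.Gamma ((n:ℝ) + 1) = (n:ℝ) * Real.Gamma (n:ℝ) := Real.Gamma_add_one hn0.ne'
  have hΓn : Real.Gamma (n:ℝ) ≠ 0 := (Real.Gamma_pos_of_pos hn0).ne'
  have hΓp : Real.Gamma (1 + p) ≠ 0 := (Real.Gamma_pos_of_pos (by linarith)).ne'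
  simp only [aSeq, Nat.cast_add, Nat.cast_one, h1, h2]
  field_simp

lemma aSeq_lb {p : ℝ} (hp : 0 < p) :
    ∀ m : ℕ, 1 + p * ∑ i ∈ Finset.range m, (1:ℝ) / (i + 1) ≤ aSeq p (m + 1) := by
  intro m
  induction m with
  | zero => simp [aSeq_one hp]
  | succ m ih =>
    have hm1 : 1 ≤ m + 1 := Nat.succ_le_succ (Nat.zero_le m)
    have hm0 : (0:ℝ) < (m:ℝ) + 1 := by positivity
    have h1 : (1:ℝ) ≤ aSeq p (m + 1) := by
      refine le_trans ?_ ih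
      have : 0 ≤ p * ∑ i ∈ Finset.range m, (1:ℝ) / (i + 1) := by
        refine mul_nonneg hp.le (Finset.sum_nonneg fun i _ => by positivity)
      linarith
    have key : aSeq p (m + 1) + p / ((m:ℝ) + 1) ≤ aSeq p (m + 1 + 1) := by
      rw [aSeq_succ hp hm1]
      push_cast
      rw [mul_div_assoc', mul_add]
      calc aSeq p (m+1) + p/((m:ℝ)+1) = (aSeq p (m+1) * ((m:ℝ)+1) + p)/((m:ℝ)+1) := by
            field_simp
        _ ≤ (aSeq p (m+1) * ((m:ℝ)+1) + aSeq p (m+1) * p)/((m:ℝ)+1) := by gcongr; nlinarith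
    rw [Finset.sum_range_succ]
    push_cast
    calc 1 + p * (∑ i ∈ Finset.range m, (1:ℝ)/(i+1) + 1/((m:ℝ)+1))
        = (1 + p * ∑ i ∈ Finset.range m, (1:ℝ)/(i+1)) + p / ((m:ℝ)+1) := by ring
      _ ≤ aSeq p (m + 1) + p / ((m:ℝ)+1) := by linarith [ih]
      _ ≤ aSeq p (m + 1 + 1) := key

lemma aSeq_tendsto_atTop {p : ℝ} (hp : 0 < p) : Tendsto (aSeq p) atTop atTop := by
  rw [← tendsto_add_atTop_iff_nat 1]
  refine tendsto_atTop_mono (aSeq_lb hp) ?_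
  refine tendsto_atTop_add_const_left _ 1 ?_
  exact (Real.tendsto_sum_range_one_div_nat_succ_atTop.const_mul_atTop hp)

lemma one_div_aSeq_tendsto {p : ℝ} (hp : 0 < p) :
    Tendsto (fun n => 1 / aSeq p n) atTop (nhds 0) := by
  simpa [one_div, Pi.inv_def] using (aSeq_tendsto_atTop hp).inv_tendsto_atTop

lemma contraction_tendsto_zero {u δ ε : ℕ → ℝ}
    (hu : ∀ n, 0 ≤ u n) (hδ0 : ∀ n, 0 ≤ δ n) (hδ1 : ∀ n, δ n ≤ 1)
    (hrec : ∀ n, 1 ≤ n → u (n + 1) ≤ u n * (1 - δ n) + ε n)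
    (hδsum : Tendsto (fun N => ∑ i ∈ Finset.range N, δ (i + 1)) atTop atTop)
    (hεδ : ∀ η : ℝ, 0 < η → ∀ᶠ n in atTop, ε n ≤ η * δ n) :
    Tendsto u atTop (nhds 0) := by
  rw [Metric.tendsto_atTop]
  intro η hη
  obtain ⟨N₀, hN₀⟩ := eventually_atTop.mp (hεδ (η/4) (by positivity))
  set N := max N₀ 1 with hN
  have hN1 : 1 ≤ N := le_max_right _ _
  set w : ℕ → ℝ := fun m => max (u (N + m) - η/4) 0 with hw
  have hw0 : ∀ m, 0 ≤ w m := fun m => le_max_right _ _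
  have hstep : ∀ m, w (m + 1) ≤ w m * (1 - δ (N + m)) := by
    intro m
    have h1 : u (N + m + 1) ≤ u (N + m) * (1 - δ (N + m)) + (η/4) * δ (N + m) := by
      refine le_trans (hrec (N + m) (le_trans hN1 (Nat.le_add_right _ _))) ?_
      have := hN₀ (N + m) (le_trans (le_max_left _ _) (Nat.le_add_right _ _))
      linarith
    have hδnn := hδ0 (N + m); have hδle := hδ1 (N + m)
    have h2 : u (N + m + 1) - η/4 ≤ (u (N + m) - η/4) * (1 - δ (N + m)) := by nlinarith
    have h3 : (u (N + m) - η/4) * (1 - δ (N + m)) ≤ w m * (1 - δ (N + m)) := by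
      have : u (N + m) - η/4 ≤ w m := le_max_left _ _
      nlinarith [hw0 m]
    refine max_le (by rw [show N + (m+1) = N + m + 1 by ring]; linarith) ?_
    exact mul_nonneg (hw0 m) (by linarith)
  have hbound : ∀ m, w m ≤ w 0 * Real.exp (-(∑ j ∈ Finset.range m, δ (N + j))) := by
    intro m
    induction m with
    | zero => simp
    | succ m ih =>
      calc w (m + 1) ≤ w m * (1 - δ (N + m)) := hstep m
        _ ≤ (w 0 * Real.exp (-(∑ j ∈ Finset.range m, δ (N + j)))) * (1 - δ (N + m)) := by
            have : (0:ℝ) ≤ 1 - δ (N + m) := by linarith [hδ1 (N + m)]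
            nlinarith
        _ ≤ (w 0 * Real.exp (-(∑ j ∈ Finset.range m, δ (N + j)))) * Real.exp (-(δ (N + m))) := by
            have h1 : 1 - δ (N + m) ≤ Real.exp (-(δ (N + m))) := by
              have := Real.add_one_le_exp (-(δ (N + m))); linarith
            have : 0 ≤ w 0 * Real.exp (-(∑ j ∈ Finset.range m, δ (N + j))) :=
              mul_nonneg (hw0 0) (Real.exp_pos _).le
            nlinarith
        _ = w 0 * Real.exp (-(∑ j ∈ Finset.range (m+1), δ (N + j))) := by
            rw [Finset.sum_range_succ, neg_add, Real.exp_add, ← mul_assoc]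
  have hS : Tendsto (fun m => ∑ j ∈ Finset.range m, δ (N + j)) atTop atTop := by
    have hkey : ∀ m, ∑ j ∈ Finset.range m, δ (N + j)
        = ∑ i ∈ Finset.range ((N - 1) + m), δ (i + 1) - ∑ i ∈ Finset.range (N - 1), δ (i + 1) := by
      intro m
      rw [Finset.sum_range_add]
      have : ∀ j, (N - 1) + j + 1 = N + j := fun j => by omega
      simp only [this]
      ring
    simp only [hkey]
    refine tendsto_atTop_add_const_right _ _ ?_
    exact hδsum.comp (tendsto_atTop_mono (fun m => Nat.le_add_left m _) tendsto_id)
  have hw_tendsto : Tendsto (fun m => w 0 * Real.exp (-(∑ j ∈ Finset.range m, δ (N + j))))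
      atTop (nhds 0) := by
    rw [show (0:ℝ) = w 0 * 0 by ring]
    exact (Real.tendsto_exp_atBot.comp (tendsto_neg_atBot_iff.mpr hS)).const_mul _
  obtain ⟨M, hM⟩ := eventually_atTop.mp
    ((hw_tendsto.eventually (gt_mem_nhds (show (0:ℝ) < η/4 by positivity))))
  refine ⟨N + M, fun n hn => ?_⟩
  have hn' : n = N + (n - N) := by omega
  have hm : M ≤ n - N := by omega
  have h1 : w (n - N) ≤ w 0 * Real.exp (-(∑ j ∈ Finset.range (n - N), δ (N + j))) := hbound _
  have h2 := hM (n - N) hm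
  have h3 : u n - η/4 ≤ w (n - N) := by
    simp only [hw]
    rw [← hn']
    exact le_max_left _ _
  rw [Real.dist_eq, abs_of_nonneg (by linarith [hu n] : (0:ℝ) ≤ u n - 0)]
  simp only [sub_zero]
  linarith

lemma tendsto_tsum_div {e t f : ℕ → ℝ}
    (he : ∀ k, 0 ≤ e k) (ht : ∀ k, 1 ≤ k → 0 < t k)
    (hf : ∀ n, 1 ≤ n → HasSum (fun j => t (n + j)) (f n))
    (hfpos : ∀ n, 1 ≤ n → 0 < f n)
    (hrat : Tendsto (fun k => e k / t k) atTop (nhds 1)) :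
    Tendsto (fun n => (∑' j, e (n + j)) / f n) atTop (nhds 1) := by
  rw [Metric.tendsto_atTop]
  intro η hη
  set ε := min (η/2) (1/2) with hε
  have hε0 : 0 < ε := lt_min (by positivity) (by norm_num)
  have hεη : ε < η := lt_of_le_of_lt (min_le_left _ _) (by linarith)
  obtain ⟨N₀, hN₀⟩ := eventually_atTop.mp
    (Metric.tendsto_atTop.mp hrat ε hε0 |> fun ⟨N, h⟩ => eventually_atTop.mpr ⟨N, h⟩)
  set N := max N₀ 1 with hN
  have hN1 : 1 ≤ N := le_max_right _ _
  have hsand : ∀ k, N ≤ k → (1 - ε) * t k ≤ e k ∧ e k ≤ (1 + ε) * t k := by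
    intro k hk
    have htk := ht k (le_trans hN1 hk)
    have hd := hN₀ k (le_trans (le_max_left _ _) hk)
    rw [Real.dist_eq, abs_lt] at hd
    constructor
    · have : 1 - ε < e k / t k := by linarith
      calc (1 - ε) * t k ≤ (e k / t k) * t k := by nlinarith
        _ = e k := by field_simp
    · have : e k / t k < 1 + ε := by linarith
      calc e k = (e k / t k) * t k := by field_simp
        _ ≤ (1 + ε) * t k := by nlinarith
  refine ⟨N, fun n hn => ?_⟩
  have hn1 : 1 ≤ n := le_trans hN1 hn
  have hfn := hfpos n hn1
  have htsum := hf n hn1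
  have hsummable_t : Summable (fun j => t (n + j)) := htsum.summable
  have hle : ∀ j, e (n + j) ≤ (1 + ε) * t (n + j) :=
    fun j => (hsand (n + j) (le_trans hn (Nat.le_add_right _ _))).2
  have hge : ∀ j, (1 - ε) * t (n + j) ≤ e (n + j) :=
    fun j => (hsand (n + j) (le_trans hn (Nat.le_add_right _ _))).1
  have hsummable_e : Summable (fun j => e (n + j)) :=
    Summable.of_nonneg_of_le (fun j => he _) hle (hsummable_t.mul_left _)
  have hub : (∑' j, e (n + j)) ≤ (1 + ε) * f n := by
    calc (∑' j, e (n + j)) ≤ ∑' j, (1 + ε) * t (n + j) :=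
          Summable.tsum_le_tsum hle hsummable_e (hsummable_t.mul_left _)
      _ = (1 + ε) * f n := by rw [tsum_mul_left, htsum.tsum_eq]
  have hlb : (1 - ε) * f n ≤ (∑' j, e (n + j)) := by
    calc (1 - ε) * f n = ∑' j, (1 - ε) * t (n + j) := by rw [tsum_mul_left, htsum.tsum_eq]
      _ ≤ ∑' j, e (n + j) := Summable.tsum_le_tsum hge (hsummable_t.mul_left _) hsummable_e
  have h1 : (∑' j, e (n + j)) / f n ≤ 1 + ε := by rw [div_le_iff₀ hfn]; linarith
  have h2 : 1 - ε ≤ (∑' j, e (n + j)) / f n := by rw [le_div_iff₀ hfn]; linarith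
  have h3 : |(∑' j, e (n + j)) / f n - 1| ≤ ε := abs_le.mpr ⟨by linarith, by linarith⟩
  rw [Real.dist_eq]
  linarith

end aux

set_option maxHeartbeats 2000000 in
theorem stmt12 {Ω : Type*} {m0 : MeasurableSpace Ω} (μ : Measure Ω) [IsProbabilityMeasure μ]
    (ℱ : Filtration ℕ m0) (p : ℝ) (hp : 0 < p) (hp1 : p < 1)
    (X : ℕ → Ω → ℕ)
    (hXval : ∀ n ω, X n ω ≤ 1)
    (hX1 : ∀ᵐ ω ∂μ, X 1 ω = 1)
    (hadp : ∀ n, Measurable[ℱ n] (X n))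
    (hcond : ∀ n : ℕ, 1 ≤ n →
      μ[(fun ω => (X (n + 1) ω : ℝ)) | ℱ n] =ᵐ[μ]
        fun ω => p * (lazyH X n ω : ℝ) / n) :
    Tendsto (fun k : ℕ =>
        (∫ ω, (lazyD μ p X k ω) ^ 2 ∂μ) / (p / ((k : ℝ) * aSeq p k))) atTop (nhds 1) ∧
    Tendsto (fun n : ℕ =>
        (∑' j : ℕ, ∫ ω, (lazyD μ p X (n + j) ω) ^ 2 ∂μ) / (1 / aSeq p n)) atTop (nhds 1) := by
  -- measurability of casts
  have hXm : ∀ n, Measurable (fun ω => (X n ω : ℝ)) :=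
    fun n => measurable_from_top.comp ((hadp n).mono (ℱ.le n) le_rfl)
  have hHmF : ∀ n, Measurable[ℱ n] (fun ω => (lazyH X n ω : ℝ)) := by
    intro n
    refine Measurable.comp measurable_from_top ?_
    unfold lazyH
    refine Finset.measurable_sum _ fun i hi => ?_
    exact (hadp i).mono (ℱ.mono (Finset.mem_Icc.mp hi).2) le_rfl
  have hHm : ∀ n, Measurable (fun ω => (lazyH X n ω : ℝ)) :=
    fun n => (hHmF n).mono (ℱ.le n) le_rfl
  -- bounds
  have hXb : ∀ n ω, (0:ℝ) ≤ (X n ω : ℝ) ∧ (X n ω : ℝ) ≤ 1 := by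
    intro n ω; constructor
    · positivity
    · exact_mod_cast hXval n ω
  have hHb : ∀ n ω, (0:ℝ) ≤ (lazyH X n ω : ℝ) ∧ (lazyH X n ω : ℝ) ≤ n := by
    intro n ω
    constructor
    · positivity
    · have : lazyH X n ω ≤ n := by
        calc lazyH X n ω ≤ ∑ i ∈ Finset.Icc 1 n, 1 := Finset.sum_le_sum fun i _ => hXval i ω
          _ = n := by simp
      exact_mod_cast this
  -- integrability helper
  have hbdd : ∀ (f : Ω → ℝ) (C : ℝ), Measurable f → (∀ ω, |f ω| ≤ C) → Integrable f μ := by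
    intro f C hf hC
    exact (integrable_const C).mono' hf.aestronglyMeasurable
      (Eventually.of_forall fun ω => by simpa using hC ω)
  have hXint : ∀ n, Integrable (fun ω => (X n ω : ℝ)) μ := fun n =>
    hbdd _ 1 (hXm n) fun ω => by rw [abs_of_nonneg (hXb n ω).1]; exact (hXb n ω).2
  have hHint : ∀ n, Integrable (fun ω => (lazyH X n ω : ℝ)) μ := fun n =>
    hbdd _ n (hHm n) fun ω => by rw [abs_of_nonneg (hHb n ω).1]; exact (hHb n ω).2
  have hHXint : ∀ n m, Integrable (fun ω => (lazyH X n ω : ℝ) * (X m ω : ℝ)) μ := by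
    intro n m
    refine hbdd _ n ((hHm n).mul (hXm m)) fun ω => ?_
    rw [abs_mul, abs_of_nonneg (hHb n ω).1, abs_of_nonneg (hXb m ω).1]
    calc (lazyH X n ω : ℝ) * (X m ω : ℝ) ≤ (lazyH X n ω : ℝ) * 1 :=
          mul_le_mul_of_nonneg_left (hXb m ω).2 (hHb n ω).1
      _ ≤ n := by rw [mul_one]; exact (hHb n ω).2
  have hHsqint : ∀ n, Integrable (fun ω => (lazyH X n ω : ℝ)^2) μ := by
    intro n
    refine hbdd _ (n^2) ((hHm n).pow_const 2) fun ω => ?_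
    rw [abs_of_nonneg (by positivity)]
    exact pow_le_pow_left₀ (hHb n ω).1 (hHb n ω).2 2
  -- lazyH recursion
  have hHsucc : ∀ n ω, (lazyH X (n+1) ω : ℝ) = (lazyH X n ω : ℝ) + (X (n+1) ω : ℝ) := by
    intro n ω
    have : lazyH X (n+1) ω = lazyH X n ω + X (n+1) ω := by
      unfold lazyH
      exact Finset.sum_Icc_succ_top (Nat.succ_le_succ (Nat.zero_le n)) _
    exact_mod_cast this
  -- conditional expectation of X (n+1)
  have hIX : ∀ n, 1 ≤ n → ∫ ω, (X (n+1) ω : ℝ) ∂μ = (p / n) * ∫ ω, (lazyH X n ω : ℝ) ∂μ := by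
    intro n hn
    have h1 := integral_condExp (μ := μ) (ℱ.le n) (f := fun ω => (X (n+1) ω : ℝ))
    rw [integral_congr_ae (hcond n hn)] at h1
    rw [← h1]
    rw [← integral_const_mul]
    congr 1 with ω
    ring
  -- E[H n] = a n
  have hEH : ∀ n, 1 ≤ n → ∫ ω, (lazyH X n ω : ℝ) ∂μ = aSeq p n := by
    intro n hn
    induction n with
    | zero => omega
    | succ m ih =>
      rcases Nat.eq_or_lt_of_le hn with h1 | h1
      · -- m + 1 = 1
        have hm : m = 0 := by omega
        subst hm
        have heq : (fun ω => (lazyH X 1 ω : ℝ)) =ᵐ[μ] (fun _ => (1:ℝ)) := by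
          filter_upwards [hX1] with ω hω
          simp [lazyH, hω]
        rw [integral_congr_ae heq]
        simp [aSeq_one hp]
      · have hm : 1 ≤ m := by omega
        have ihm := ih hm
        have : ∫ ω, (lazyH X (m+1) ω : ℝ) ∂μ
            = (∫ ω, (lazyH X m ω : ℝ) ∂μ) + ∫ ω, (X (m+1) ω : ℝ) ∂μ := by
          rw [← integral_add (hHint m) (hXint (m+1))]
          exact integral_congr_ae (Eventually.of_forall fun ω => hHsucc m ω)
        rw [this, hIX m hm, ihm, aSeq_succ hp hm]
        have hm0 : ((m:ℝ)) ≠ 0 := Nat.cast_ne_zero.mpr (by omega)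
        field_simp
  -- pull-out: ∫ H_n * X_{n+1} = (p/n) * ∫ H_n ^ 2
  have hIXH : ∀ n, 1 ≤ n → ∫ ω, (lazyH X n ω : ℝ) * (X (n+1) ω : ℝ) ∂μ
      = (p / n) * ∫ ω, (lazyH X n ω : ℝ)^2 ∂μ := by
    intro n hn
    have hsm : StronglyMeasurable[ℱ n] (fun ω => (lazyH X n ω : ℝ)) := (hHmF n).stronglyMeasurable
    have hpull := condExp_mul_of_stronglyMeasurable_left (μ := μ) (m := ℱ n) hsm
      (hHXint n (n+1)) (hXint (n+1))
    have h2 : (fun ω => (lazyH X n ω : ℝ)) * μ[(fun ω => (X (n+1) ω : ℝ)) | ℱ n]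
        =ᵐ[μ] fun ω => (p / n) * (lazyH X n ω : ℝ)^2 := by
      filter_upwards [hcond n hn] with ω hω
      simp only [Pi.mul_apply, hω]
      ring
    have h1 : ∫ ω, (lazyH X n ω : ℝ) * (X (n+1) ω : ℝ) ∂μ
        = ∫ ω, (μ[(fun ω => (lazyH X n ω : ℝ)) * (fun ω => (X (n+1) ω : ℝ)) | ℱ n]) ω ∂μ :=
      (integral_condExp (μ := μ) (ℱ.le n)).symm
    have h4 : ∫ ω, (μ[(fun ω => (lazyH X n ω : ℝ)) * (fun ω => (X (n+1) ω : ℝ)) | ℱ n]) ω ∂μ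
        = ∫ ω, (p / n) * (lazyH X n ω : ℝ)^2 ∂μ :=
      integral_congr_ae (hpull.trans h2)
    rw [h1, h4, integral_const_mul]
  -- X^2 = X
  have hXsq : ∀ n ω, ((X n ω : ℝ))^2 = (X n ω : ℝ) := by
    intro n ω
    rcases Nat.le_one_iff_eq_zero_or_eq_one.mp (hXval n ω) with h | h <;> simp [h]
  -- second moment recursion
  have hBrec : ∀ n, 1 ≤ n → ∫ ω, (lazyH X (n+1) ω : ℝ)^2 ∂μ
      = (∫ ω, (lazyH X n ω : ℝ)^2 ∂μ) * ((n + 2*p)/n) + p * aSeq p n / n := by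
    intro n hn
    have hn0 : ((n:ℝ)) ≠ 0 := Nat.cast_ne_zero.mpr (by omega)
    have hpt : ∀ ω, (lazyH X (n+1) ω : ℝ)^2
        = (lazyH X n ω : ℝ)^2 + (2 * ((lazyH X n ω : ℝ) * (X (n+1) ω : ℝ)) + (X (n+1) ω : ℝ)) := by
      intro ω
      rw [hHsucc n ω]
      have := hXsq (n+1) ω
      nlinarith [this]
    have hint2 : Integrable (fun ω => 2 * ((lazyH X n ω : ℝ) * (X (n+1) ω : ℝ)) + (X (n+1) ω : ℝ)) μ :=
      ((hHXint n (n+1)).const_mul 2).add (hXint (n+1))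
    calc ∫ ω, (lazyH X (n+1) ω : ℝ)^2 ∂μ
        = ∫ ω, ((lazyH X n ω : ℝ)^2 + (2 * ((lazyH X n ω : ℝ) * (X (n+1) ω : ℝ)) + (X (n+1) ω : ℝ))) ∂μ :=
          integral_congr_ae (Eventually.of_forall fun ω => hpt ω)
      _ = (∫ ω, (lazyH X n ω : ℝ)^2 ∂μ)
          + ((∫ ω, 2 * ((lazyH X n ω : ℝ) * (X (n+1) ω : ℝ)) ∂μ) + ∫ ω, (X (n+1) ω : ℝ) ∂μ) := by
          rw [integral_add (hHsqint n) hint2, integral_add ((hHXint n (n+1)).const_mul 2) (hXint (n+1))]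
      _ = (∫ ω, (lazyH X n ω : ℝ)^2 ∂μ) * ((n + 2*p)/n) + p * aSeq p n / n := by
          rw [integral_const_mul, hIXH n hn, hIX n hn, hEH n hn]
          field_simp
          ring
  -- pointwise formula for the martingale difference
  have hd : ∀ n, 1 ≤ n → ∀ ω, lazyD μ p X (n+1) ω
      = ((X (n+1) ω : ℝ) - p * (lazyH X n ω : ℝ) / n) / aSeq p (n+1) := by
    intro n hn ω
    have hn0 : ((n:ℝ)) ≠ 0 := Nat.cast_ne_zero.mpr (by omega)
    have hnp : ((n:ℝ)) + p ≠ 0 := by positivity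
    have ha : aSeq p n ≠ 0 := (aSeq_pos hp hn).ne'
    unfold lazyD lazyM
    simp only [Nat.add_sub_cancel]
    rw [hEH (n+1) (by omega), hEH n hn, hHsucc n ω, aSeq_succ hp hn]
    field_simp
    ring
  -- formula for E[d_{n+1}^2]
  have he : ∀ n, 1 ≤ n → ∫ ω, (lazyD μ p X (n+1) ω)^2 ∂μ
      = (p * aSeq p n / n - p^2 * (∫ ω, (lazyH X n ω : ℝ)^2 ∂μ) / n^2) / (aSeq p (n+1))^2 := by
    intro n hn
    have hn0 : ((n:ℝ)) ≠ 0 := Nat.cast_ne_zero.mpr (by omega)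
    have expand : ∀ ω, (lazyD μ p X (n+1) ω)^2
        = ((X (n+1) ω : ℝ) + (-(2*p/n)) * ((lazyH X n ω : ℝ) * (X (n+1) ω : ℝ))
           + (p/n)^2 * (lazyH X n ω : ℝ)^2) / (aSeq p (n+1))^2 := by
      intro ω
      rw [hd n hn ω, div_pow]
      congr 1
      have hx := hXsq (n+1) ω
      linear_combination hx
    have hint1 : Integrable (fun ω => (-(2*p/(n:ℝ))) * ((lazyH X n ω : ℝ) * (X (n+1) ω : ℝ))
        + (p/(n:ℝ))^2 * (lazyH X n ω : ℝ)^2) μ :=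
      ((hHXint n (n+1)).const_mul _).add ((hHsqint n).const_mul _)
    calc ∫ ω, (lazyD μ p X (n+1) ω)^2 ∂μ
        = ∫ ω, ((X (n+1) ω : ℝ) + ((-(2*p/n)) * ((lazyH X n ω : ℝ) * (X (n+1) ω : ℝ))
           + (p/n)^2 * (lazyH X n ω : ℝ)^2)) / (aSeq p (n+1))^2 ∂μ := by
          refine integral_congr_ae (Eventually.of_forall fun ω => ?_)
          beta_reduce
          rw [expand ω]; ring
      _ = (∫ ω, ((X (n+1) ω : ℝ) + ((-(2*p/n)) * ((lazyH X n ω : ℝ) * (X (n+1) ω : ℝ))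
           + (p/n)^2 * (lazyH X n ω : ℝ)^2)) ∂μ) / (aSeq p (n+1))^2 := by
          rw [integral_div]
      _ = (p * aSeq p n / n - p^2 * (∫ ω, (lazyH X n ω : ℝ)^2 ∂μ) / n^2) / (aSeq p (n+1))^2 := by
          rw [integral_add (hXint (n+1)) hint1,
            integral_add ((hHXint n (n+1)).const_mul _) ((hHsqint n).const_mul _),
            integral_const_mul, integral_const_mul, hIXH n hn, hIX n hn, hEH n hn]
          congr 1
          field_simp
          ring
  -- u n := B n / (n a n) tends to 0
  have hu : Tendsto (fun n : ℕ => (∫ ω, (lazyH X n ω : ℝ)^2 ∂μ) / ((n:ℝ) * aSeq p n))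
      atTop (nhds 0) := by
    have hBnn : ∀ n, 0 ≤ ∫ ω, (lazyH X n ω : ℝ)^2 ∂μ :=
      fun n => integral_nonneg fun ω => sq_nonneg _
    refine contraction_tendsto_zero
      (u := fun n => (∫ ω, (lazyH X n ω : ℝ)^2 ∂μ) / ((n:ℝ) * aSeq p n))
      (δ := fun n => ((1-p)*(n:ℝ)+p)/(((n:ℝ)+1)*((n:ℝ)+p)))
      (ε := fun n => p/(((n:ℝ)+1)*((n:ℝ)+p)))
      (fun n => div_nonneg (hBnn n) (mul_nonneg (Nat.cast_nonneg n) (aSeq_nonneg hp n)))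
      (fun n => div_nonneg (by nlinarith [Nat.cast_nonneg (α := ℝ) n])
        (by positivity)) (fun n => ?_) (fun n hn => ?_) ?_ (fun η hη => ?_)
    · rw [div_le_one (by positivity)]
      nlinarith [Nat.cast_nonneg (α := ℝ) n]
    · -- the recursion, in fact an equality
      beta_reduce
      have hn0 : (0:ℝ) < (n:ℝ) := by exact_mod_cast hn
      have ha : 0 < aSeq p n := aSeq_pos hp hn
      have h1 : aSeq p (n+1) = aSeq p n * (((n:ℝ)+p)/(n:ℝ)) := aSeq_succ hp hn
      rw [hBrec n hn, h1]
      push_cast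
      rw [div_le_iff₀ (by positivity)]
      have key : (∫ ω, (lazyH X n ω : ℝ)^2 ∂μ) * (((n:ℝ) + 2*p)/(n:ℝ)) + p * aSeq p n / (n:ℝ)
          = ((∫ ω, (lazyH X n ω : ℝ)^2 ∂μ) / ((n:ℝ) * aSeq p n)
              * (1 - ((1-p)*(n:ℝ)+p)/(((n:ℝ)+1)*((n:ℝ)+p)))
            + p/(((n:ℝ)+1)*((n:ℝ)+p))) * (((n:ℝ)+1) * (aSeq p n * (((n:ℝ)+p)/(n:ℝ)))) := by
        field_simp
        ring
      rw [key]
    · -- divergence of ∑ δ (i+1)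
      have hlow : ∀ i : ℕ, (1-p)/2 * (1/((i:ℝ)+2))
          ≤ ((1-p)*((i:ℝ)+1)+p)/((((i:ℝ)+1)+1)*(((i:ℝ)+1)+p)) := by
        intro i
        rw [div_mul_div_comm, div_le_div_iff₀ (by positivity) (by positivity)]
        nlinarith [Nat.cast_nonneg (α := ℝ) i, mul_nonneg (sub_nonneg.mpr hp1.le) (Nat.cast_nonneg (α := ℝ) i), mul_nonneg (mul_nonneg (sub_nonneg.mpr hp1.le) (Nat.cast_nonneg (α := ℝ) i)) (Nat.cast_nonneg (α := ℝ) i)]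
      have hdiv : Tendsto (fun N => ∑ i ∈ Finset.range N, (1-p)/2 * (1/((i:ℝ)+2)))
          atTop atTop := by
        simp only [← Finset.mul_sum]
        refine Tendsto.const_mul_atTop (by linarith) ?_
        have hshift : Tendsto (fun N => ∑ i ∈ Finset.range (N+1), (1:ℝ)/((i:ℝ)+1))
            atTop atTop :=
          Real.tendsto_sum_range_one_div_nat_succ_atTop.comp
            (tendsto_atTop_mono (fun m => Nat.le_succ m) tendsto_id)
        have heq : ∀ N : ℕ, ∑ i ∈ Finset.range N, (1:ℝ)/((i:ℝ)+2)
            = (∑ i ∈ Finset.range (N+1), (1:ℝ)/((i:ℝ)+1)) - 1 := by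
          intro N
          have h := Finset.sum_range_succ' (fun i => (1:ℝ)/((i:ℝ)+1)) N
          have h2 : ∑ i ∈ Finset.range N, (1:ℝ)/(((i+1:ℕ):ℝ)+1)
              = ∑ i ∈ Finset.range N, (1:ℝ)/((i:ℝ)+2) :=
            Finset.sum_congr rfl fun i _ => by push_cast; ring_nf
          rw [h, h2] at *
          norm_num
        simp only [heq]
        exact tendsto_atTop_add_const_right _ _ hshift
      refine tendsto_atTop_mono (fun N => Finset.sum_le_sum fun i _ => ?_) hdiv
      beta_reduce
      push_cast
      exact hlow i
    · -- eventually ε n ≤ η δ n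
      have hT : Tendsto (fun n : ℕ => η * ((1-p)*(n:ℝ)+p)) atTop atTop := by
        refine Tendsto.const_mul_atTop hη ?_
        refine tendsto_atTop_add_const_right _ _ ?_
        exact Tendsto.const_mul_atTop (by linarith) tendsto_natCast_atTop_atTop
      filter_upwards [hT.eventually_ge_atTop p] with n hn
      rw [mul_div_assoc']
      have hD : (0:ℝ) < ((n:ℝ)+1)*((n:ℝ)+p) := by positivity
      rw [div_le_div_iff₀ hD hD]
      nlinarith [hD.le]
  -- ratio formula
  have hfrac1 : Tendsto (fun n : ℕ => ((n:ℝ)+1)/((n:ℝ)+p)) atTop (nhds 1) := by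
    have hden : Tendsto (fun n : ℕ => (n:ℝ)+p) atTop atTop :=
      tendsto_atTop_add_const_right _ p tendsto_natCast_atTop_atTop
    have hinv : Tendsto (fun n : ℕ => (1-p)*((n:ℝ)+p)⁻¹) atTop (nhds 0) := by
      simpa using hden.inv_tendsto_atTop.const_mul (1-p)
    have h0 : Tendsto (fun n : ℕ => 1 + (1-p)*((n:ℝ)+p)⁻¹) atTop (nhds 1) := by
      simpa using tendsto_const_nhds.add hinv
    refine h0.congr fun n => ?_
    have : ((n:ℝ)+p) ≠ 0 := by positivity
    field_simp
    ring
  have hone : Tendsto (fun n : ℕ => 1 - p * ((∫ ω, (lazyH X n ω : ℝ)^2 ∂μ) / ((n:ℝ) * aSeq p n)))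
      atTop (nhds 1) := by
    have h2 : Tendsto (fun _ : ℕ => (1:ℝ)) atTop (nhds 1) := tendsto_const_nhds
    simpa using h2.sub (hu.const_mul p)
  have hr : ∀ n : ℕ, 1 ≤ n →
      (∫ ω, (lazyD μ p X (n+1) ω)^2 ∂μ) / (p / (((n:ℝ)+1) * aSeq p (n+1)))
        = (((n:ℝ)+1)/((n:ℝ)+p))
          * (1 - p * ((∫ ω, (lazyH X n ω : ℝ)^2 ∂μ) / ((n:ℝ) * aSeq p n))) := by
    intro n hn
    have hn0 : (0:ℝ) < (n:ℝ) := by exact_mod_cast hn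
    have ha : 0 < aSeq p n := aSeq_pos hp hn
    have hnp : (0:ℝ) < (n:ℝ) + p := by positivity
    rw [he n hn, aSeq_succ hp hn]
    field_simp
  have goal1 : Tendsto (fun k : ℕ =>
      (∫ ω, (lazyD μ p X k ω) ^ 2 ∂μ) / (p / ((k : ℝ) * aSeq p k))) atTop (nhds 1) := by
    rw [← tendsto_add_atTop_iff_nat 1]
    have hlim : Tendsto (fun n : ℕ => (((n:ℝ)+1)/((n:ℝ)+p))
        * (1 - p * ((∫ ω, (lazyH X n ω : ℝ)^2 ∂μ) / ((n:ℝ) * aSeq p n)))) atTop (nhds 1) := by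
      simpa using hfrac1.mul hone
    refine hlim.congr' ?_
    filter_upwards [eventually_ge_atTop 1] with n hn
    rw [← hr n hn]
    push_cast
    rfl
  refine ⟨goal1, ?_⟩
  -- part 2
  have ht_def : ∀ k : ℕ, 1 ≤ k → 1 / aSeq p k - 1 / aSeq p (k+1) = p / (((k:ℝ)+p) * aSeq p k) := by
    intro k hk
    have hk0 : (0:ℝ) < (k:ℝ) := by exact_mod_cast hk
    have ha : 0 < aSeq p k := aSeq_pos hp hk
    rw [aSeq_succ hp hk]
    have hnp : (0:ℝ) < (k:ℝ) + p := by positivity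
    generalize hA : aSeq p k = A at ha ⊢
    rw [div_sub_div _ _ ha.ne' (by positivity), eq_div_iff (by positivity), div_mul_eq_mul_div,
      div_eq_iff (by positivity)]
    field_simp
    ring
  have ht_pos : ∀ k : ℕ, 1 ≤ k → 0 < 1 / aSeq p k - 1 / aSeq p (k+1) := by
    intro k hk
    rw [ht_def k hk]
    have hk0 : (0:ℝ) < (k:ℝ) := by exact_mod_cast hk
    have ha : 0 < aSeq p k := aSeq_pos hp hk
    positivity
  have hHasSum : ∀ n : ℕ, 1 ≤ n →
      HasSum (fun j => 1 / aSeq p (n + j) - 1 / aSeq p ((n + j) + 1)) (1 / aSeq p n) := by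
    intro n hn
    rw [hasSum_iff_tendsto_nat_of_nonneg (fun j => (ht_pos (n + j) (le_trans hn (Nat.le_add_right _ _))).le) _]
    have htel : ∀ m : ℕ, ∑ j ∈ Finset.range m, (1 / aSeq p (n + j) - 1 / aSeq p ((n + j) + 1))
        = 1 / aSeq p n - 1 / aSeq p (n + m) := by
      intro m
      have := Finset.sum_range_sub' (fun j => 1 / aSeq p (n + j)) m
      exact this
    simp only [htel]
    have h2 : Tendsto (fun m : ℕ => 1 / aSeq p (n + m)) atTop (nhds 0) :=
      (one_div_aSeq_tendsto hp).comp (tendsto_atTop_mono (fun m => Nat.le_add_left m n) tendsto_id)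
    simpa using tendsto_const_nhds.sub h2
  have hrat : Tendsto (fun k : ℕ => (∫ ω, (lazyD μ p X k ω) ^ 2 ∂μ)
      / (1 / aSeq p k - 1 / aSeq p (k+1))) atTop (nhds 1) := by
    have hfrac2 : Tendsto (fun k : ℕ => ((k:ℝ)+p)/(k:ℝ)) atTop (nhds 1) := by
      have hden : Tendsto (fun k : ℕ => (k:ℝ)) atTop atTop := tendsto_natCast_atTop_atTop
      have hinv : Tendsto (fun k : ℕ => p*((k:ℝ))⁻¹) atTop (nhds 0) := by
        simpa using hden.inv_tendsto_atTop.const_mul p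
      have h0 : Tendsto (fun k : ℕ => 1 + p*((k:ℝ))⁻¹) atTop (nhds 1) := by
        simpa using tendsto_const_nhds.add hinv
      refine (h0.congr' ?_)
      filter_upwards [eventually_ge_atTop 1] with k hk
      have hk0 : ((k:ℝ)) ≠ 0 := by
        have : (0:ℝ) < (k:ℝ) := by exact_mod_cast hk
        exact this.ne'
      field_simp
    have hlim : Tendsto (fun k : ℕ =>
        ((∫ ω, (lazyD μ p X k ω) ^ 2 ∂μ) / (p / ((k : ℝ) * aSeq p k))) * (((k:ℝ)+p)/(k:ℝ)))
        atTop (nhds 1) := by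
      simpa using goal1.mul hfrac2
    refine hlim.congr' ?_
    filter_upwards [eventually_ge_atTop 1] with k hk
    have hk0 : (0:ℝ) < (k:ℝ) := by exact_mod_cast hk
    have ha : 0 < aSeq p k := aSeq_pos hp hk
    have hnp : (0:ℝ) < (k:ℝ) + p := by positivity
    rw [ht_def k hk]
    field_simp
  have := tendsto_tsum_div (e := fun k => ∫ ω, (lazyD μ p X k ω) ^ 2 ∂μ)
    (t := fun k => 1 / aSeq p k - 1 / aSeq p (k+1)) (f := fun n => 1 / aSeq p n)
    (fun k => integral_nonneg fun ω => sq_nonneg _) ht_pos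
    (fun n hn => by simpa using hHasSum n hn)
    (fun n hn => by
      have := aSeq_pos hp hn
      positivity)
    hrat
  exact this
end
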